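/- arXiv:2506.15149 — 6 statements merged into one kernel-verified Lean document; each statement's English description precedes it below -/
import Mathlib

section
/- Let x = (x₁,x₂,x₃) ∈ 𝔼 (so that |x₃| < 1). Set β₁ = (x₁ − conj(x₂)·x₃)/(1 − |x₃|²), β₂ = (x₂ − conj(x₁)·x₃)/(1 − |x₃|²), z₁(x) = 2·conj(β₁) / (1 + |β₁|² − |β₂|² + √((1 + |β₁|² − |β₂|²)² − 4|β₁|²)) and z₂(x) = 2·conj(β₂) / (1 + |β₂|² − |β₁|² + √((1 + |β₂|² − |β₁|²)² − 4|β₂|²)). Then (z₁(x), z₂(x)) ∈ 𝔻 × 𝔻, and the function g(z₁,z₂) = √((1−|z₁|²)(1−|z₂|²)) / |1 − x₁z₁ − x₂z₂ + x₃z₁z₂| on 𝔻̄ × 𝔻̄ attains its supremum at (z₁(x), z₂(x)); moreover this maximizer is unique: g(z₁,z₂) < g(z₁(x), z₂(x)) for every (z₁,z₂) ∈ 𝔻̄ × 𝔻̄ with (z₁,z₂) ≠ (z₁(x), z₂(x)). -/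
noncomputable section

open Complex

/-- The expression `1 - x₁ z₁ - x₂ z₂ + x₃ z₁ z₂`. -/
def hexDen (x : ℂ × ℂ × ℂ) (z₁ z₂ : ℂ) : ℂ :=
  1 - x.1 * z₁ - x.2.1 * z₂ + x.2.2 * z₁ * z₂

/-- The tetrablock `𝔼 ⊆ ℂ³`. -/
def tetrablock : Set (ℂ × ℂ × ℂ) :=
  {x | ∀ z₁ z₂ : ℂ, ‖z₁‖ ≤ 1 → ‖z₂‖ ≤ 1 → hexDen x z₁ z₂ ≠ 0}

/-- The distinguished boundary `b𝔼` of the tetrablock. -/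
def bE : Set (ℂ × ℂ × ℂ) :=
  {x | x.1 = (starRingEnd ℂ) x.2.1 * x.2.2 ∧ ‖x.2.2‖ = 1 ∧ ‖x.2.1‖ ≤ 1}

/-- The linear fractional map `ψ_{z₁,z₂}(a, x₁, x₂, x₃)`. -/
def psi (z₁ z₂ : ℂ) (q : ℂ × ℂ × ℂ × ℂ) : ℂ :=
  q.1 * ((Real.sqrt ((1 - ‖z₁‖ ^ 2) * (1 - ‖z₂‖ ^ 2)) : ℝ) : ℂ) / hexDen q.2 z₁ z₂

/-- `sup_{z₁,z₂ ∈ 𝔻} |ψ_{z₁,z₂}(q)|`. -/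
def supPsi (q : ℂ × ℂ × ℂ × ℂ) : ℝ :=
  sSup {r : ℝ | ∃ z₁ z₂ : ℂ, ‖z₁‖ < 1 ∧ ‖z₂‖ < 1 ∧ r = ‖psi z₁ z₂ q‖}

/-- The function `K_*` on the tetrablock. -/
def Kstar (x : ℂ × ℂ × ℂ) : ℝ :=
  sSup {r : ℝ | ∃ z₁ z₂ : ℂ, ‖z₁‖ < 1 ∧ ‖z₂‖ < 1 ∧
    r = Real.sqrt ((1 - ‖z₁‖ ^ 2) * (1 - ‖z₂‖ ^ 2)) / ‖hexDen x z₁ z₂‖}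

/-- The hexablock `ℍ ⊆ ℂ⁴`. -/
def hexablock : Set (ℂ × ℂ × ℂ × ℂ) :=
  {q | q.2 ∈ tetrablock ∧ supPsi q < 1}

/-- Operator norm of a `2 × 2` complex matrix acting on Euclidean `ℂ²`. -/
def opNorm2 (A : Matrix (Fin 2) (Fin 2) ℂ) : ℝ :=
  ‖Matrix.toEuclideanCLM (𝕜 := ℂ) A‖

/-- `π(A) = (a₂₁, a₁₁, a₂₂, det A)`. -/
def piMap (A : Matrix (Fin 2) (Fin 2) ℂ) : ℂ × ℂ × ℂ × ℂ :=
  (A 1 0, A 0 0, A 1 1, A.det)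

/-- The structured singular value `μ_hexa`, valued in `[0, ∞]`;
the infimum over the empty set is `∞`, whose inverse is `0`. -/
def muHexa (A : Matrix (Fin 2) (Fin 2) ℂ) : ENNReal :=
  (sInf {r : ENNReal | ∃ X : Matrix (Fin 2) (Fin 2) ℂ,
      X 1 0 = 0 ∧ (1 - A * X).det = 0 ∧ r = ENNReal.ofReal (opNorm2 X)})⁻¹

/-- The μ-hexablock `ℍ_μ`. -/
def hexMu : Set (ℂ × ℂ × ℂ × ℂ) :=
  {q | ∃ A : Matrix (Fin 2) (Fin 2) ℂ, muHexa A < 1 ∧ piMap A = q}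

/-- The normed hexablock `ℍ_N`. -/
def hexN : Set (ℂ × ℂ × ℂ × ℂ) :=
  {q | ∃ A : Matrix (Fin 2) (Fin 2) ℂ, opNorm2 A < 1 ∧ piMap A = q}

/-- `ℍ_p = π(𝒰(2))`. -/
def hexP : Set (ℂ × ℂ × ℂ × ℂ) :=
  {q | ∃ U : Matrix (Fin 2) (Fin 2) ℂ, U ∈ Matrix.unitaryGroup (Fin 2) ℂ ∧ piMap U = q}

/-- Evaluation of a polynomial in four variables at a point of `ℂ⁴`. -/
def evalPoly4 (p : MvPolynomial (Fin 4) ℂ) (q : ℂ × ℂ × ℂ × ℂ) : ℂ :=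
  MvPolynomial.eval ![q.1, q.2.1, q.2.2.1, q.2.2.2] p

/-- Polynomial convexity of a subset of `ℂ⁴`. -/
def PolyConvex (K : Set (ℂ × ℂ × ℂ × ℂ)) : Prop :=
  ∀ z ∉ K, ∃ p : MvPolynomial (Fin 4) ℂ,
    (∀ w ∈ K, ‖evalPoly4 p w‖ ≤ 1) ∧ 1 < ‖evalPoly4 p z‖

/-- Polynomial convex hull of a subset of `ℂ⁴`. -/
def polyHull (K : Set (ℂ × ℂ × ℂ × ℂ)) : Set (ℂ × ℂ × ℂ × ℂ) :=
  {z | ∀ p : MvPolynomial (Fin 4) ℂ,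
    ‖evalPoly4 p z‖ ≤ sSup {r : ℝ | ∃ w ∈ K, r = ‖evalPoly4 p w‖}}

/-- The pentablock `𝒫 ⊆ ℂ³`. -/
def pentablock : Set (ℂ × ℂ × ℂ) :=
  {q | ∃ A : Matrix (Fin 2) (Fin 2) ℂ, opNorm2 A < 1 ∧ (A 1 0, A 0 0 + A 1 1, A.det) = q}

private lemma sqnorm (z : ℂ) : ‖z‖ ^ 2 = normSq z := Complex.sq_norm z
private lemma nsq_lt_one (z : ℂ) (h : ‖z‖ < 1) : normSq z < 1 := by
  nlinarith [norm_nonneg z, sqnorm z]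
private lemma norm_lt_one (z : ℂ) (h : normSq z < 1) : ‖z‖ < 1 := by
  nlinarith [norm_nonneg z, sqnorm z]
private lemma norm_le_one (z : ℂ) (h : normSq z ≤ 1) : ‖z‖ ≤ 1 := by
  nlinarith [norm_nonneg z, sqnorm z]

private lemma slice_id (a b w : ℂ) :
    normSq (a - b * w) * normSq a
      - (normSq a - normSq b) * (1 - normSq w) * normSq a
      = normSq (((normSq a : ℝ) : ℂ) * w - a * (starRingEnd ℂ) b) := by
  simp only [Complex.normSq_apply, Complex.sub_re, Complex.sub_im, Complex.mul_re,
    Complex.mul_im, Complex.conj_re, Complex.conj_im, Complex.ofReal_re, Complex.ofReal_im]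
  ring

private lemma quad_id (x₁ x₂ x₃ w : ℂ) :
    normSq (1 - x₂ * w) - normSq (x₁ - x₃ * w)
      = (1 - normSq x₁) - 2 * ((x₂ - (starRingEnd ℂ) x₁ * x₃) * w).re
        + (normSq x₂ - normSq x₃) * normSq w := by
  simp only [Complex.normSq_apply, Complex.sub_re, Complex.sub_im, Complex.mul_re,
    Complex.mul_im, Complex.conj_re, Complex.conj_im, Complex.one_re, Complex.one_im]
  ring

private lemma swap_id (x₁ x₂ x₃ : ℂ) :
    normSq (x₂ - (starRingEnd ℂ) x₁ * x₃) - normSq (x₁ - (starRingEnd ℂ) x₂ * x₃)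
      = (normSq x₂ - normSq x₁) * (1 - normSq x₃) := by
  simp only [Complex.normSq_apply, Complex.sub_re, Complex.sub_im, Complex.mul_re,
    Complex.mul_im, Complex.conj_re, Complex.conj_im]
  ring

private lemma re_eq_norm (z : ℂ) (h : z.re = ‖z‖) : z = ((‖z‖ : ℝ) : ℂ) := by
  have h2 : z.re ^ 2 = normSq z := by rw [h]; exact sqnorm z
  have him : z.im = 0 := by
    have := Complex.normSq_apply z; nlinarith [sq_nonneg z.im]
  apply Complex.ext <;> simp [← h, him]

private lemma tetra_unfold {x₁ x₂ x₃ : ℂ} (hx : (x₁, x₂, x₃) ∈ tetrablock) :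
    ∀ z₁ z₂ : ℂ, ‖z₁‖ ≤ 1 → ‖z₂‖ ≤ 1 → 1 - x₁ * z₁ - x₂ * z₂ + x₃ * z₁ * z₂ ≠ 0 := hx

private lemma tetra_x3 {x₁ x₂ x₃ : ℂ} (hx : (x₁, x₂, x₃) ∈ tetrablock) : normSq x₃ < 1 := by
  have hxq := tetra_unfold hx
  by_contra hc
  push_neg at hc
  have hx3 : x₃ ≠ 0 := by
    intro h; rw [h] at hc; simp at hc; linarith
  have hex : ∃ s : ℂ, s ^ 2 = (x₁ + x₂) ^ 2 - 4 * x₃ := by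
    have := IsAlgClosed.exists_pow_nat_eq (k := ℂ) ((x₁ + x₂) ^ 2 - 4 * x₃) (n := 2)
    exact this (by norm_num)
  obtain ⟨sd, hsd⟩ := hex
  set r : ℂ := ((x₁ + x₂) + sd) / (2 * x₃) with hr
  set r' : ℂ := ((x₁ + x₂) - sd) / (2 * x₃) with hr'
  have hroot : x₃ * r ^ 2 - (x₁ + x₂) * r + 1 = 0 := by
    rw [hr]; field_simp; linear_combination hsd
  have hroot' : x₃ * r' ^ 2 - (x₁ + x₂) * r' + 1 = 0 := by
    rw [hr']; field_simp; linear_combination hsd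
  have hprod : r * r' * x₃ = 1 := by
    rw [hr, hr']; field_simp; linear_combination (-1) * hsd
  have hn : normSq r * normSq r' * normSq x₃ = 1 := by
    rw [← map_mul, ← map_mul, hprod, normSq_one]
  have hcase : normSq r ≤ 1 ∨ normSq r' ≤ 1 := by
    by_contra h; push_neg at h
    have h1 : 1 < normSq r * normSq r' := by nlinarith [normSq_nonneg r]
    nlinarith [h1, hc, hn]
  rcases hcase with h | h
  · exact hxq r r (norm_le_one r h) (norm_le_one r h)
      (by linear_combination hroot)
  · exact hxq r' r' (norm_le_one r' h) (norm_le_one r' h)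
      (by linear_combination hroot')

private lemma tetra_x1 {x₁ x₂ x₃ : ℂ} (hx : (x₁, x₂, x₃) ∈ tetrablock) : normSq x₁ < 1 := by
  have hxq := tetra_unfold hx
  by_contra hc
  push_neg at hc
  have hx1 : x₁ ≠ 0 := by intro h; rw [h] at hc; simp at hc; linarith
  have hns : normSq x₁ ≠ 0 := fun h => hx1 (normSq_eq_zero.mp h)
  have hz : normSq ((starRingEnd ℂ) x₁ / ((normSq x₁ : ℝ) : ℂ)) ≤ 1 := by
    rw [normSq_div, normSq_conj, normSq_ofReal]
    rw [div_le_one (by positivity)]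
    nlinarith [normSq_nonneg x₁]
  refine hxq _ 0 (norm_le_one _ hz) (by norm_num) ?_
  have : x₁ * ((starRingEnd ℂ) x₁ / ((normSq x₁ : ℝ) : ℂ)) = 1 := by
    rw [mul_div_assoc', Complex.mul_conj]
    exact div_self (by exact_mod_cast hns)
  rw [mul_zero, mul_zero, sub_zero, add_zero, this, sub_self]

private lemma tetra_swap {x₁ x₂ x₃ : ℂ} (hx : (x₁, x₂, x₃) ∈ tetrablock) :
    (x₂, x₁, x₃) ∈ tetrablock := by
  intro z₁ z₂ h₁ h₂
  have := hx z₂ z₁ h₂ h₁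
  simp only [hexDen] at this ⊢
  intro h; exact this (by linear_combination h)

private lemma tetra_F {x₁ x₂ x₃ : ℂ} (hx : (x₁, x₂, x₃) ∈ tetrablock) :
    ∀ w : ℂ, ‖w‖ ≤ 1 → normSq (x₁ - x₃ * w) < normSq (1 - x₂ * w) := by
  intro w hw
  have hxq := tetra_unfold hx
  have ha : (1 : ℂ) - x₂ * w ≠ 0 := by
    intro h
    exact hxq 0 w (by norm_num) hw (by linear_combination h)
  rcases eq_or_ne (x₁ - x₃ * w) 0 with hb | hb
  · rw [hb, map_zero]; exact normSq_pos.mpr ha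
  · by_contra hcon
    push_neg at hcon
    have hz1 : ‖(1 - x₂ * w) / (x₁ - x₃ * w)‖ ≤ 1 := by
      rw [norm_div, div_le_one (norm_pos_iff.mpr hb)]
      have e1 := sqnorm (1 - x₂*w); have e2 := sqnorm (x₁ - x₃*w)
      nlinarith [norm_nonneg (1 - x₂*w), norm_nonneg (x₁ - x₃*w)]
    refine hxq _ w hz1 hw ?_
    rw [show (1:ℂ) - x₁ * ((1 - x₂ * w) / (x₁ - x₃ * w)) - x₂ * w + x₃ * ((1 - x₂ * w) / (x₁ - x₃ * w)) * w
      = (1 - x₂ * w) - (x₁ - x₃ * w) * ((1 - x₂ * w) / (x₁ - x₃ * w)) by ring,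
      mul_div_cancel₀ _ hb, sub_self]

set_option maxHeartbeats 1000000 in
private lemma master (x₁ x₂ x₃ : ℂ) (hx : (x₁, x₂, x₃) ∈ tetrablock) :
    ∃ (m : ℝ) (z : ℂ) (T : ℂ → ℂ), 0 < m ∧ ‖z‖ < 1 ∧
      (z = 2 * (starRingEnd ℂ) ((x₂ - (starRingEnd ℂ) x₁ * x₃) / ((1 - ‖x₃‖ ^ 2 : ℝ) : ℂ)) /
        ((1 + ‖(x₂ - (starRingEnd ℂ) x₁ * x₃) / ((1 - ‖x₃‖ ^ 2 : ℝ) : ℂ)‖ ^ 2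
            - ‖(x₁ - (starRingEnd ℂ) x₂ * x₃) / ((1 - ‖x₃‖ ^ 2 : ℝ) : ℂ)‖ ^ 2
            + Real.sqrt ((1 + ‖(x₂ - (starRingEnd ℂ) x₁ * x₃) / ((1 - ‖x₃‖ ^ 2 : ℝ) : ℂ)‖ ^ 2
                - ‖(x₁ - (starRingEnd ℂ) x₂ * x₃) / ((1 - ‖x₃‖ ^ 2 : ℝ) : ℂ)‖ ^ 2) ^ 2
              - 4 * ‖(x₂ - (starRingEnd ℂ) x₁ * x₃) / ((1 - ‖x₃‖ ^ 2 : ℝ) : ℂ)‖ ^ 2) : ℝ) : ℂ)) ∧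
      (∀ w : ℂ, ‖w‖ ≤ 1 → ‖T w‖ < 1) ∧
      (∀ w₁ w₂ : ℂ, ‖w₁‖ < 1 → ‖w₂‖ < 1 →
        m * ((1 - normSq w₁) * (1 - normSq w₂)) ≤ normSq (hexDen (x₁, x₂, x₃) w₁ w₂) ∧
        (normSq (hexDen (x₁, x₂, x₃) w₁ w₂) = m * ((1 - normSq w₁) * (1 - normSq w₂)) ↔
          w₁ = T w₂ ∧ w₂ = z)) := by
  have h3 := tetra_x3 hx
  have h1 := tetra_x1 hx
  have hF := tetra_F hx
  set c : ℂ := x₂ - (starRingEnd ℂ) x₁ * x₃ with hc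
  set B : ℝ := ‖c‖ with hBdef
  have hB0 : 0 ≤ B := norm_nonneg c
  have hBsq : B ^ 2 = normSq c := sqnorm c
  set α : ℝ := 1 - normSq x₁ with hα
  set γ : ℝ := normSq x₂ - normSq x₃ with hγ
  set Sg : ℝ := α + γ with hSg
  -- Σ > 2B
  have hS2B : 2 * B < Sg := by
    rcases eq_or_ne c 0 with h0 | h0
    · have hB : B = 0 := by rw [hBdef, h0, norm_zero]
      have := hF 1 (by norm_num)
      have hq := quad_id x₁ x₂ x₃ 1
      rw [← hc, h0] at hq
      simp only [zero_mul, Complex.zero_re, normSq_one] at hq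
      rw [hB]; simp only [mul_zero]
      rw [hSg, hα, hγ]; linarith
    · have hBpos : 0 < B := norm_pos_iff.mpr h0
      set ζ : ℂ := (starRingEnd ℂ) c / ((B : ℝ) : ℂ) with hζ
      have hζn : ‖ζ‖ ≤ 1 := by
        rw [hζ, norm_div, RCLike.norm_conj, Complex.norm_real, Real.norm_eq_abs,
          _root_.abs_of_nonneg hB0, ← hBdef, div_self hBpos.ne']
      have hnζ : normSq ζ = 1 := by
        rw [hζ, normSq_div, normSq_conj, normSq_ofReal, ← hBsq]
        field_simp
      have hre : (c * ζ).re = B := by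
        have : c * ζ = ((B : ℝ) : ℂ) := by
          rw [hζ, mul_div_assoc', Complex.mul_conj, ← hBsq]
          push_cast
          rw [sq]
          rw [mul_div_assoc, div_self (by exact_mod_cast hBpos.ne'), mul_one]
        rw [this, Complex.ofReal_re]
      have := hF ζ hζn
      have hq := quad_id x₁ x₂ x₃ ζ
      rw [← hc, hre, hnζ] at hq
      rw [hSg]; rw [← hα, ← hγ] at hq; linarith
  have hSg0 : 0 < Sg := by linarith
  have hdisc : 0 ≤ Sg ^ 2 - 4 * B ^ 2 := by nlinarith
  set Δ : ℝ := Real.sqrt (Sg ^ 2 - 4 * B ^ 2) with hΔdef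
  have hΔ0 : 0 ≤ Δ := Real.sqrt_nonneg _
  have hΔsq : Δ ^ 2 = Sg ^ 2 - 4 * B ^ 2 := Real.sq_sqrt hdisc
  have hden : 0 < Sg + Δ := by linarith
  set s : ℝ := 2 * B / (Sg + Δ) with hs
  have hs0 : 0 ≤ s := by positivity
  have hs1 : s < 1 := by rw [hs, div_lt_one hden]; linarith
  set m : ℝ := (α - γ + Δ) / 2 with hm
  have hγm : γ + m = (Sg + Δ) / 2 := by rw [hm, hSg]; ring
  have hγm0 : 0 < γ + m := by rw [hγm]; linarith
  clear_value B α γ Sg Δ s m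
  have key1 : (γ + m) * s = B := by
    rw [hγm, hs]; field_simp
  have key2 : α - m = (γ + m) * s ^ 2 := by
    have h4 : (Sg - Δ) * (Sg + Δ) = 4 * B ^ 2 := by linear_combination -hΔsq
    have hαm : α - m = (Sg - Δ) / 2 := by rw [hm, hSg]; ring
    rw [hαm, hγm, hs, div_pow, div_mul_div_comm]
    rw [div_eq_div_iff (by norm_num) (by nlinarith [mul_pos hden hden])]
    linear_combination (2 * (Sg + Δ)) * h4
  -- the point z
  set z : ℂ := 2 * (starRingEnd ℂ) c / (((Sg + Δ : ℝ)) : ℂ) with hzdef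
  have hnz : normSq z = s ^ 2 := by
    rw [hzdef, normSq_div, normSq_mul, normSq_conj, normSq_ofReal, ← hBsq, hs]
    rw [div_pow, mul_pow]
    norm_num [normSq_apply]
    ring
  have hzn : ‖z‖ < 1 := norm_lt_one z (by rw [hnz]; nlinarith)
  have hcz : c * z = ((B * s : ℝ) : ℂ) := by
    have e1 : c * (2 * (starRingEnd ℂ) c) = ((2 * B ^ 2 : ℝ) : ℂ) := by
      rw [show c * (2 * (starRingEnd ℂ) c) = 2 * (c * (starRingEnd ℂ) c) by ring,
        Complex.mul_conj, hBsq]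
      push_cast
      ring
    rw [hzdef, hs, mul_div_assoc', e1]
    push_cast
    ring
  -- quadratic minimum identity at s
  have hmin : m * (1 - s ^ 2) = α - 2 * (B * s) + γ * s ^ 2 := by
    linear_combination -key2 - (2 * s) * key1
  -- LemB
  have lemB : ∀ w : ℂ, ‖w‖ ≤ 1 →
      m * (1 - normSq w) ≤ α - 2 * ((c * w).re) + γ * normSq w ∧
      (α - 2 * ((c * w).re) + γ * normSq w = m * (1 - normSq w) → w = z) := by
    intro w hw
    have hr : normSq w = ‖w‖ ^ 2 := (sqnorm w).symm
    have hre : (c * w).re ≤ B * ‖w‖ := by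
      calc (c * w).re ≤ |(c * w).re| := le_abs_self _
        _ ≤ ‖c * w‖ := Complex.abs_re_le_norm _
        _ = B * ‖w‖ := by rw [norm_mul, ← hBdef]
    have hexp : α - 2 * ((c * w).re) + γ * normSq w - m * (1 - normSq w)
        = (γ + m) * (‖w‖ - s) ^ 2 + 2 * (B * ‖w‖ - (c * w).re) := by
      rw [hr]; linear_combination 2 * ‖w‖ * key1 + key2
    constructor
    · nlinarith [mul_nonneg hγm0.le (sq_nonneg (‖w‖ - s)), hre]
    · intro heq
      have hsum : (γ + m) * (‖w‖ - s) ^ 2 + 2 * (B * ‖w‖ - (c * w).re) = 0 := by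
        rw [← hexp]; linarith [heq]
      have ht2 : 0 ≤ 2 * (B * ‖w‖ - (c * w).re) := by linarith [hre]
      have ht1n : 0 ≤ (γ + m) * (‖w‖ - s) ^ 2 := mul_nonneg hγm0.le (sq_nonneg _)
      have hX : (‖w‖ - s) ^ 2 = 0 := by nlinarith [hsum, ht2, ht1n]
      have h1 : ‖w‖ = s := by
        have := sq_eq_zero_iff.mp hX
        linarith
      have h2 : (c * w).re = B * s := by nlinarith [hsum, hX, h1]
      have h3 : (c * w).re = ‖c * w‖ := by rw [norm_mul, ← hBdef, h1, h2]
      have h4 : c * w = ((B * s : ℝ) : ℂ) := by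
        have := re_eq_norm (c * w) h3
        rw [this, norm_mul, ← hBdef, h1]
      rcases eq_or_ne c 0 with h0 | h0
      · have hB : B = 0 := by rw [hBdef, h0, norm_zero]
        have hw0 : w = 0 := by
          have : normSq w = 0 := by rw [hr, h1, hs, hB]; simp
          exact normSq_eq_zero.mp this
        have hz0 : z = 0 := by rw [hzdef, h0]; simp
        rw [hw0, hz0]
      · exact mul_left_cancel₀ h0 (h4.trans hcz.symm)
  -- m > 0
  have hm0 : 0 < m := by
    have hq := quad_id x₁ x₂ x₃ z
    rw [← hc] at hq
    have hrez : (c * z).re = B * s := by rw [hcz, Complex.ofReal_re]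
    rw [hrez, hnz] at hq
    have := hF z hzn.le
    have h1s : 0 < 1 - s ^ 2 := by nlinarith
    have h2s : 0 < m * (1 - s ^ 2) := by rw [hmin]; rw [← hα, ← hγ] at hq; linarith
    nlinarith [h1s, h2s]
  -- the map T
  set T : ℂ → ℂ := fun w =>
    (1 - x₂ * w) * (starRingEnd ℂ) (x₁ - x₃ * w) / ((normSq (1 - x₂ * w) : ℝ) : ℂ) with hT
  have hTn : ∀ w : ℂ, ‖w‖ ≤ 1 → ‖T w‖ < 1 := by
    intro w hw
    have hab := hF w hw
    have ha0 : (1 : ℂ) - x₂ * w ≠ 0 := by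
      intro h; rw [h, map_zero] at hab; exact absurd hab (not_lt.mpr (normSq_nonneg _))
    have hapos : 0 < ‖1 - x₂ * w‖ := norm_pos_iff.mpr ha0
    have hTe : ‖T w‖ = ‖x₁ - x₃ * w‖ / ‖1 - x₂ * w‖ := by
      simp only [hT]
      rw [norm_div, norm_mul, RCLike.norm_conj, Complex.norm_real, Real.norm_eq_abs,
        _root_.abs_of_nonneg (normSq_nonneg _), ← sqnorm, sq]
      rw [mul_comm ‖1 - x₂ * w‖ ‖x₁ - x₃ * w‖, mul_div_mul_right _ _ hapos.ne']
    rw [hTe, div_lt_one hapos]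
    nlinarith [sqnorm (x₁ - x₃ * w), sqnorm (1 - x₂ * w), norm_nonneg (x₁ - x₃ * w),
      norm_nonneg (1 - x₂ * w)]
  refine ⟨m, z, T, hm0, hzn, ?_, hTn, ?_⟩
  · -- formula translation
    have hρ : (0 : ℝ) < 1 - normSq x₃ := by linarith
    set ρ : ℝ := 1 - normSq x₃ with hρdef
    have hρc : ((ρ : ℝ) : ℂ) ≠ 0 := by exact_mod_cast hρ.ne'
    set c₁ : ℂ := x₁ - (starRingEnd ℂ) x₂ * x₃ with hc₁
    rw [show (1 - ‖x₃‖ ^ 2 : ℝ) = ρ from by rw [sqnorm]]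
    have hA : ‖c / ((ρ : ℝ) : ℂ)‖ ^ 2 = normSq c / ρ ^ 2 := by
      rw [sqnorm, normSq_div, normSq_ofReal, sq]
    have hA1 : ‖c₁ / ((ρ : ℝ) : ℂ)‖ ^ 2 = normSq c₁ / ρ ^ 2 := by
      rw [sqnorm, normSq_div, normSq_ofReal, sq]
    have hsw := swap_id x₁ x₂ x₃
    rw [← hc, ← hc₁] at hsw
    have hkey : 1 + normSq c / ρ ^ 2 - normSq c₁ / ρ ^ 2 = Sg / ρ := by
      rw [hSg, hα, hγ]
      field_simp
      linear_combination hsw + ρ * hρdef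
    have hsqrt : Real.sqrt ((Sg / ρ) ^ 2 - 4 * (normSq c / ρ ^ 2)) = Δ / ρ := by
      rw [show (Sg / ρ) ^ 2 - 4 * (normSq c / ρ ^ 2) = (Sg ^ 2 - 4 * B ^ 2) / ρ ^ 2 from by
        rw [← hBsq]; field_simp]
      rw [Real.sqrt_div hdisc, Real.sqrt_sq hρ.le, hΔdef]
    rw [hA, hA1, hkey, hsqrt]
    rw [hzdef, map_div₀, Complex.conj_ofReal]
    rw [show Sg / ρ + Δ / ρ = (Sg + Δ) / ρ from by ring]
    have hDc : ((Sg + Δ : ℝ) : ℂ) ≠ 0 := by exact_mod_cast hden.ne'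
    push_cast
    field_simp
  · intro w₁ w₂ hw₁ hw₂
    have hab := hF w₂ hw₂.le
    set a : ℂ := 1 - x₂ * w₂ with ha
    set bb : ℂ := x₁ - x₃ * w₂ with hbb
    have ha0 : a ≠ 0 := by
      intro h; rw [h, map_zero] at hab; exact absurd hab (not_lt.mpr (normSq_nonneg _))
    have hanpos : 0 < normSq a := normSq_pos.mpr ha0
    have hacast : ((normSq a : ℝ) : ℂ) ≠ 0 := by exact_mod_cast hanpos.ne'
    have hD : hexDen (x₁, x₂, x₃) w₁ w₂ = a - bb * w₁ := by
      simp only [hexDen, ha, hbb]; ring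
    have hsl := slice_id a bb w₁
    have hq := quad_id x₁ x₂ x₃ w₂
    rw [← hc, ← ha, ← hbb, ← hα, ← hγ] at hq
    have hlemB := lemB w₂ hw₂.le
    clear_value a bb
    have h1w : 0 < 1 - normSq w₁ := by linarith [nsq_lt_one w₁ hw₁]
    have h2w : 0 < 1 - normSq w₂ := by linarith [nsq_lt_one w₂ hw₂]
    have hEn : 0 ≤ normSq (((normSq a : ℝ) : ℂ) * w₁ - a * (starRingEnd ℂ) bb) :=
      normSq_nonneg _
    have step1 : (normSq a - normSq bb) * (1 - normSq w₁) ≤ normSq (a - bb * w₁) := by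
      have hmul : (normSq a - normSq bb) * (1 - normSq w₁) * normSq a
          ≤ normSq (a - bb * w₁) * normSq a := by linarith [hsl, hEn]
      exact le_of_mul_le_mul_right hmul hanpos
    have step2 : m * (1 - normSq w₂) ≤ normSq a - normSq bb := by
      linarith [hlemB.1, hq]
    rw [hD]
    have hprod : m * (1 - normSq w₂) * (1 - normSq w₁)
        ≤ (normSq a - normSq bb) * (1 - normSq w₁) :=
      mul_le_mul_of_nonneg_right step2 h1w.le
    refine ⟨by linarith [step1, hprod], ?_, ?_⟩
    · intro heq
      have e2 : normSq a - normSq bb = m * (1 - normSq w₂) := by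
        have hc1 : (normSq a - normSq bb) * (1 - normSq w₁)
            ≤ m * (1 - normSq w₂) * (1 - normSq w₁) := by linarith [step1, heq]
        exact (mul_right_cancel₀ h1w.ne' (le_antisymm hprod hc1)).symm
      have e1 : normSq (a - bb * w₁) = (normSq a - normSq bb) * (1 - normSq w₁) := by
        rw [heq, e2]; ring
      have hw₂z : w₂ = z := hlemB.2 (by linarith [hq, e2])
      rw [e1] at hsl
      have hE0 : normSq (((normSq a : ℝ) : ℂ) * w₁ - a * (starRingEnd ℂ) bb) = 0 := by
        linarith [hsl]
      have hzero : ((normSq a : ℝ) : ℂ) * w₁ - a * (starRingEnd ℂ) bb = 0 :=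
        normSq_eq_zero.mp hE0
      have hw₁T : w₁ = T w₂ := by
        simp only [hT, ← ha, ← hbb]
        rw [eq_div_iff hacast]
        linear_combination hzero
      exact ⟨hw₁T, hw₂z⟩
    · rintro ⟨hw₁T, hw₂z⟩
      have hTw : ((normSq a : ℝ) : ℂ) * w₁ = a * (starRingEnd ℂ) bb := by
        rw [hw₁T]; simp only [hT, ← ha, ← hbb]
        field_simp
      have hE0 : normSq (((normSq a : ℝ) : ℂ) * w₁ - a * (starRingEnd ℂ) bb) = 0 := by
        rw [hTw, sub_self, map_zero]
      rw [hE0] at hsl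
      have e1 : normSq (a - bb * w₁) = (normSq a - normSq bb) * (1 - normSq w₁) := by
        have hmm : normSq (a - bb * w₁) * normSq a
            = (normSq a - normSq bb) * (1 - normSq w₁) * normSq a := by linarith [hsl]
        exact mul_right_cancel₀ hanpos.ne' hmm
      have e2 : normSq a - normSq bb = m * (1 - normSq w₂) := by
        rw [hq, hw₂z]
        have hrez : (c * z).re = B * s := by rw [hcz, Complex.ofReal_re]
        rw [hrez, hnz]
        linarith [hmin]
      rw [e1, e2]; ring


set_option maxHeartbeats 2000000 in
/-- For `x ∈ 𝔼`, the explicit point `(z₁, z₂)` lies in `𝔻 × 𝔻` and is the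
unique maximizer over `𝔻̄ × 𝔻̄` of
`g(w₁, w₂) = √((1-|w₁|²)(1-|w₂|²)) / |1 - x₁w₁ - x₂w₂ + x₃w₁w₂|`. -/
theorem stmt0 (x₁ x₂ x₃ : ℂ) (hx : (x₁, x₂, x₃) ∈ tetrablock)
    (β₁ β₂ z₁ z₂ : ℂ)
    (hβ₁ : β₁ = (x₁ - (starRingEnd ℂ) x₂ * x₃) / ((1 - ‖x₃‖ ^ 2 : ℝ) : ℂ))
    (hβ₂ : β₂ = (x₂ - (starRingEnd ℂ) x₁ * x₃) / ((1 - ‖x₃‖ ^ 2 : ℝ) : ℂ))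
    (hz₁ : z₁ = 2 * (starRingEnd ℂ) β₁ /
      ((1 + ‖β₁‖ ^ 2 - ‖β₂‖ ^ 2 +
        Real.sqrt ((1 + ‖β₁‖ ^ 2 - ‖β₂‖ ^ 2) ^ 2 - 4 * ‖β₁‖ ^ 2) : ℝ) : ℂ))
    (hz₂ : z₂ = 2 * (starRingEnd ℂ) β₂ /
      ((1 + ‖β₂‖ ^ 2 - ‖β₁‖ ^ 2 +
        Real.sqrt ((1 + ‖β₂‖ ^ 2 - ‖β₁‖ ^ 2) ^ 2 - 4 * ‖β₂‖ ^ 2) : ℝ) : ℂ))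
    (g : ℂ → ℂ → ℝ)
    (hg : ∀ w₁ w₂ : ℂ, g w₁ w₂ =
      Real.sqrt ((1 - ‖w₁‖ ^ 2) * (1 - ‖w₂‖ ^ 2)) / ‖hexDen (x₁, x₂, x₃) w₁ w₂‖) :
    ‖z₁‖ < 1 ∧ ‖z₂‖ < 1 ∧
    (∀ w₁ w₂ : ℂ, ‖w₁‖ ≤ 1 → ‖w₂‖ ≤ 1 → g w₁ w₂ ≤ g z₁ z₂) ∧
    (∀ w₁ w₂ : ℂ, ‖w₁‖ ≤ 1 → ‖w₂‖ ≤ 1 → (w₁, w₂) ≠ (z₁, z₂) → g w₁ w₂ < g z₁ z₂) := by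
  
  subst hβ₁ hβ₂
  have hx' : (x₂, x₁, x₃) ∈ tetrablock := tetra_swap hx
  obtain ⟨m, z₂', T₂, hm, hn2, hf2, hT₂, hmain⟩ := master x₁ x₂ x₃ hx
  obtain ⟨m', z₁', T₁, hm', hn1, hf1, hT₁, hmain'⟩ := master x₂ x₁ x₃ hx'
  have gz2 : z₂ = z₂' := hz₂.trans hf2.symm
  have gz1 : z₁ = z₁' := hz₁.trans hf1.symm
  have hswp : ∀ u v : ℂ, hexDen (x₂, x₁, x₃) u v = hexDen (x₁, x₂, x₃) v u := by
    intro u v; simp only [hexDen]; ring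
  have hpn : ‖T₂ z₂'‖ < 1 := hT₂ z₂' hn2.le
  have hqn : ‖T₁ z₁'‖ < 1 := hT₁ z₁' hn1.le
  have heqp : normSq (hexDen (x₁, x₂, x₃) (T₂ z₂') z₂')
      = m * ((1 - normSq (T₂ z₂')) * (1 - normSq z₂')) :=
    (hmain (T₂ z₂') z₂' hpn hn2).2.mpr ⟨rfl, rfl⟩
  have heqq : normSq (hexDen (x₂, x₁, x₃) (T₁ z₁') z₁')
      = m' * ((1 - normSq (T₁ z₁')) * (1 - normSq z₁')) :=
    (hmain' (T₁ z₁') z₁' hqn hn1).2.mpr ⟨rfl, rfl⟩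
  have h2p : 0 < 1 - normSq z₂' := by linarith [nsq_lt_one z₂' hn2]
  have h1p : 0 < 1 - normSq z₁' := by linarith [nsq_lt_one z₁' hn1]
  have hpp : 0 < 1 - normSq (T₂ z₂') := by linarith [nsq_lt_one _ hpn]
  have hqp : 0 < 1 - normSq (T₁ z₁') := by linarith [nsq_lt_one _ hqn]
  have hle1 : m' ≤ m := by
    have h := (hmain' z₂' (T₂ z₂') hn2 hpn).1
    rw [hswp z₂' (T₂ z₂'), heqp] at h
    nlinarith [mul_pos h2p hpp]
  have hle2 : m ≤ m' := by
    have h := (hmain z₁' (T₁ z₁') hn1 hqn).1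
    rw [← hswp (T₁ z₁') z₁', heqq] at h
    nlinarith [mul_pos h1p hqp]
  have hmm : m = m' := le_antisymm hle2 hle1
  have hiff := (hmain' z₂' (T₂ z₂') hn2 hpn).2.mp
    (by rw [hswp z₂' (T₂ z₂'), heqp, hmm]; ring)
  have hpz : T₂ z₂' = z₁' := hiff.2
  have heqz : normSq (hexDen (x₁, x₂, x₃) z₁' z₂')
      = m * ((1 - normSq z₁') * (1 - normSq z₂')) := by rw [← hpz]; exact heqp
  have hDz : hexDen (x₁, x₂, x₃) z₁' z₂' ≠ 0 := hx z₁' z₂' hn1.le hn2.le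
  have hDzn : 0 < ‖hexDen (x₁, x₂, x₃) z₁' z₂'‖ := norm_pos_iff.mpr hDz
  have hNz : 0 < (1 - ‖z₁'‖ ^ 2) * (1 - ‖z₂'‖ ^ 2) := by
    rw [sqnorm, sqnorm]; exact mul_pos h1p h2p
  have hgz : 0 < g z₁' z₂' := by
    rw [hg]; exact div_pos (Real.sqrt_pos.mpr hNz) hDzn
  have hstrict : ∀ w₁ w₂ : ℂ, ‖w₁‖ ≤ 1 → ‖w₂‖ ≤ 1 → (w₁, w₂) ≠ (z₁', z₂') →
      g w₁ w₂ < g z₁' z₂' := by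
    intro w₁ w₂ hw₁ hw₂ hne
    by_cases hin : ‖w₁‖ < 1 ∧ ‖w₂‖ < 1
    · have hlt : m * ((1 - normSq w₁) * (1 - normSq w₂))
          < normSq (hexDen (x₁, x₂, x₃) w₁ w₂) := by
        refine lt_of_le_of_ne (hmain w₁ w₂ hin.1 hin.2).1 ?_
        intro heq
        obtain ⟨e1, e2⟩ := (hmain w₁ w₂ hin.1 hin.2).2.mp heq.symm
        exact hne (by rw [e1, e2, hpz])
      have hDw : hexDen (x₁, x₂, x₃) w₁ w₂ ≠ 0 := hx w₁ w₂ hw₁ hw₂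
      have hDwn : 0 < ‖hexDen (x₁, x₂, x₃) w₁ w₂‖ := norm_pos_iff.mpr hDw
      have hNw : 0 ≤ (1 - ‖w₁‖ ^ 2) * (1 - ‖w₂‖ ^ 2) := by
        have a1 : ‖w₁‖ ^ 2 ≤ 1 := by nlinarith [norm_nonneg w₁]
        have a2 : ‖w₂‖ ^ 2 ≤ 1 := by nlinarith [norm_nonneg w₂]
        nlinarith
      have hsq : (g w₁ w₂) ^ 2 < (g z₁' z₂') ^ 2 := by
        rw [hg, hg, div_pow, div_pow, Real.sq_sqrt hNw, Real.sq_sqrt hNz.le]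
        rw [div_lt_div_iff₀ (by positivity) (by positivity)]
        rw [sqnorm (hexDen (x₁, x₂, x₃) z₁' z₂'), sqnorm (hexDen (x₁, x₂, x₃) w₁ w₂)]
        rw [heqz, sqnorm w₁, sqnorm w₂, sqnorm z₁', sqnorm z₂']
        nlinarith [mul_lt_mul_of_pos_left hlt (mul_pos h1p h2p)]
      have hgw0 : 0 ≤ g w₁ w₂ := by
        rw [hg]; exact div_nonneg (Real.sqrt_nonneg _) (norm_nonneg _)
      nlinarith [hsq, hgz, hgw0]
    · have hN0 : (1 - ‖w₁‖ ^ 2) * (1 - ‖w₂‖ ^ 2) = 0 := by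
        rcases not_and_or.mp hin with h | h
        · have : ‖w₁‖ = 1 := le_antisymm hw₁ (not_lt.mp h)
          rw [this]; ring
        · have : ‖w₂‖ = 1 := le_antisymm hw₂ (not_lt.mp h)
          rw [this]; ring
      rw [hg, hN0, Real.sqrt_zero, zero_div]
      exact hgz
  refine ⟨by rw [gz1]; exact hn1, by rw [gz2]; exact hn2, ?_, ?_⟩
  · intro w₁ w₂ hw₁ hw₂
    rw [gz1, gz2]
    by_cases hpair : (w₁, w₂) = (z₁', z₂')
    · obtain ⟨e1, e2⟩ := Prod.mk.injEq w₁ w₂ z₁' z₂' ▸ hpair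
      rw [e1, e2]
    · exact (hstrict w₁ w₂ hw₁ hw₂ hpair).le
  · intro w₁ w₂ hw₁ hw₂ hne
    rw [gz1, gz2]
    rw [gz1, gz2] at hne
    exact hstrict w₁ w₂ hw₁ hw₂ hne
end
end

section
/- Let (x₁,x₂,x₃) ∈ 𝔼 with x₁x₂ = x₃ (so that |x₁| < 1 and |x₂| < 1). Then sup_{z₁,z₂ ∈ 𝔻} √((1−|z₁|²)(1−|z₂|²)) / |1 − x₁z₁ − x₂z₂ + x₃z₁z₂| = 1/√((1−|x₁|²)(1−|x₂|²)), and this supremum is attained at (z₁,z₂) = (conj(x₁), conj(x₂)). Consequently, for every a ∈ ℂ one has sup_{z₁,z₂ ∈ 𝔻} |ψ_{z₁,z₂}(a,x₁,x₂,x₃)| < 1 if and only if |a| < √((1−|x₁|²)(1−|x₂|²)). -/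
noncomputable section

open Complex

lemma norm_sq_eq' (w : ℂ) : ‖w‖^2 = Complex.normSq w := by
  rw [Complex.sq_norm]

lemma key_ineq (x z : ℂ) : (1-‖x‖^2)*(1-‖z‖^2) ≤ ‖1 - x*z‖^2 := by
  have h : ‖1 - x*z‖^2 - (1-‖x‖^2)*(1-‖z‖^2) = ‖(starRingEnd ℂ) x - z‖^2 := by
    simp only [norm_sq_eq', Complex.normSq_apply, Complex.sub_re, Complex.sub_im,
      Complex.mul_re, Complex.mul_im, Complex.one_re, Complex.one_im,
      Complex.conj_re, Complex.conj_im]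
    ring
  nlinarith [sq_nonneg ‖(starRingEnd ℂ) x - z‖]

lemma mul_conj_eq (x : ℂ) : x * (starRingEnd ℂ) x = ((‖x‖^2 : ℝ) : ℂ) := by
  rw [Complex.mul_conj]; norm_cast; exact (norm_sq_eq' x).symm

/-- For a triangular point of `𝔼`, the supremum of `g` over `𝔻 × 𝔻`
equals `1/√((1-|x₁|²)(1-|x₂|²))`, is attained at `(conj x₁, conj x₂)`, and
`sup |ψ| < 1` iff `|a| < √((1-|x₁|²)(1-|x₂|²))`. -/
theorem stmt1 (x₁ x₂ x₃ : ℂ) (hx : (x₁, x₂, x₃) ∈ tetrablock) (htri : x₁ * x₂ = x₃) :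
    ‖x₁‖ < 1 ∧ ‖x₂‖ < 1 ∧
    sSup {r : ℝ | ∃ z₁ z₂ : ℂ, ‖z₁‖ < 1 ∧ ‖z₂‖ < 1 ∧
        r = Real.sqrt ((1 - ‖z₁‖ ^ 2) * (1 - ‖z₂‖ ^ 2)) / ‖hexDen (x₁, x₂, x₃) z₁ z₂‖}
      = 1 / Real.sqrt ((1 - ‖x₁‖ ^ 2) * (1 - ‖x₂‖ ^ 2)) ∧
    Real.sqrt ((1 - ‖(starRingEnd ℂ) x₁‖ ^ 2) * (1 - ‖(starRingEnd ℂ) x₂‖ ^ 2)) /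
        ‖hexDen (x₁, x₂, x₃) ((starRingEnd ℂ) x₁) ((starRingEnd ℂ) x₂)‖
      = 1 / Real.sqrt ((1 - ‖x₁‖ ^ 2) * (1 - ‖x₂‖ ^ 2)) ∧
    (∀ a : ℂ,
      supPsi (a, x₁, x₂, x₃) < 1 ↔
        ‖a‖ < Real.sqrt ((1 - ‖x₁‖ ^ 2) * (1 - ‖x₂‖ ^ 2))) := by
  have h1 : ‖x₁‖ < 1 := by
    by_contra h
    push_neg at h
    have hx1 : x₁ ≠ 0 := by
      intro h0; rw [h0, norm_zero] at h; linarith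
    have hz : ‖x₁⁻¹‖ ≤ 1 := by
      rw [norm_inv]
      exact inv_le_one_of_one_le₀ h
    exact hx x₁⁻¹ 0 hz (by simp) (by simp [hexDen, mul_inv_cancel₀ hx1])
  have h2 : ‖x₂‖ < 1 := by
    by_contra h
    push_neg at h
    have hx2 : x₂ ≠ 0 := by
      intro h0; rw [h0, norm_zero] at h; linarith
    have hz : ‖x₂⁻¹‖ ≤ 1 := by
      rw [norm_inv]
      exact inv_le_one_of_one_le₀ h
    exact hx 0 x₂⁻¹ (by simp) hz (by simp [hexDen, mul_inv_cancel₀ hx2])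
  set P : ℝ := (1 - ‖x₁‖ ^ 2) * (1 - ‖x₂‖ ^ 2) with hPdef
  have hP : 0 < P := by
    apply mul_pos <;> nlinarith [norm_nonneg x₁, norm_nonneg x₂]
  have hsP : 0 < Real.sqrt P := Real.sqrt_pos.2 hP
  have hfact : ∀ z₁ z₂ : ℂ, hexDen (x₁, x₂, x₃) z₁ z₂ = (1 - x₁*z₁) * (1 - x₂*z₂) := by
    intro z₁ z₂
    simp only [hexDen, ← htri]
    ring
  have hub : ∀ z₁ z₂ : ℂ, ‖z₁‖ < 1 → ‖z₂‖ < 1 →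
      Real.sqrt ((1 - ‖z₁‖ ^ 2) * (1 - ‖z₂‖ ^ 2)) / ‖hexDen (x₁, x₂, x₃) z₁ z₂‖
        ≤ 1 / Real.sqrt P := by
    intro z₁ z₂ hz₁ hz₂
    set Q : ℝ := (1 - ‖z₁‖ ^ 2) * (1 - ‖z₂‖ ^ 2) with hQdef
    have hDpos : 0 < ‖hexDen (x₁, x₂, x₃) z₁ z₂‖ :=
      norm_pos_iff.2 (hx z₁ z₂ hz₁.le hz₂.le)
    have hDsq : P * Q ≤ ‖hexDen (x₁, x₂, x₃) z₁ z₂‖ ^ 2 := by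
      rw [hfact, norm_mul, mul_pow]
      have k1 := key_ineq x₁ z₁
      have k2 := key_ineq x₂ z₂
      have n1 : (0:ℝ) ≤ (1 - ‖x₂‖^2) * (1 - ‖z₂‖^2) :=
        mul_nonneg (by nlinarith [norm_nonneg x₂]) (by nlinarith [norm_nonneg z₂])
      calc P * Q = ((1 - ‖x₁‖^2) * (1 - ‖z₁‖^2)) * ((1 - ‖x₂‖^2) * (1 - ‖z₂‖^2)) := by ring
        _ ≤ ‖1 - x₁*z₁‖^2 * ‖1 - x₂*z₂‖^2 :=
            mul_le_mul k1 k2 n1 (sq_nonneg _)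
    have hsD : Real.sqrt (P * Q) ≤ ‖hexDen (x₁, x₂, x₃) z₁ z₂‖ := by
      have := Real.sqrt_le_sqrt hDsq
      rwa [Real.sqrt_sq hDpos.le] at this
    rw [div_le_div_iff₀ hDpos hsP, one_mul, mul_comm, ← Real.sqrt_mul hP.le]
    exact hsD
  have hat : Real.sqrt ((1 - ‖(starRingEnd ℂ) x₁‖ ^ 2) * (1 - ‖(starRingEnd ℂ) x₂‖ ^ 2)) /
        ‖hexDen (x₁, x₂, x₃) ((starRingEnd ℂ) x₁) ((starRingEnd ℂ) x₂)‖
      = 1 / Real.sqrt P := by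
    have e1 : hexDen (x₁, x₂, x₃) ((starRingEnd ℂ) x₁) ((starRingEnd ℂ) x₂)
        = ((1 - ‖x₁‖^2 : ℝ) : ℂ) * ((1 - ‖x₂‖^2 : ℝ) : ℂ) := by
      rw [hfact, mul_conj_eq, mul_conj_eq]
      push_cast
      ring
    rw [e1, norm_mul, Complex.norm_real, Complex.norm_real, RCLike.norm_conj,
      RCLike.norm_conj, Real.norm_eq_abs, Real.norm_eq_abs,
      _root_.abs_of_nonneg (by nlinarith [norm_nonneg x₁] : (0:ℝ) ≤ 1 - ‖x₁‖^2),
      _root_.abs_of_nonneg (by nlinarith [norm_nonneg x₂] : (0:ℝ) ≤ 1 - ‖x₂‖^2)]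
    rw [div_eq_div_iff (by positivity) hsP.ne', one_mul, Real.mul_self_sqrt hP.le]
  refine ⟨h1, h2, ?_, hat, ?_⟩
  · apply le_antisymm
    · apply csSup_le
      · exact ⟨_, (starRingEnd ℂ) x₁, (starRingEnd ℂ) x₂,
          by simpa [RCLike.norm_conj] using h1, by simpa [RCLike.norm_conj] using h2, hat.symm⟩
      · rintro r ⟨z₁, z₂, hz₁, hz₂, rfl⟩
        exact hub z₁ z₂ hz₁ hz₂
    · apply le_csSup
      · exact ⟨1 / Real.sqrt P, by rintro r ⟨z₁, z₂, hz₁, hz₂, rfl⟩; exact hub z₁ z₂ hz₁ hz₂⟩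
      · exact ⟨(starRingEnd ℂ) x₁, (starRingEnd ℂ) x₂,
          by simpa [RCLike.norm_conj] using h1, by simpa [RCLike.norm_conj] using h2, hat.symm⟩
  · intro a
    have hnorm : ∀ z₁ z₂ : ℂ, ‖psi z₁ z₂ (a, x₁, x₂, x₃)‖
        = ‖a‖ * (Real.sqrt ((1 - ‖z₁‖ ^ 2) * (1 - ‖z₂‖ ^ 2)) / ‖hexDen (x₁, x₂, x₃) z₁ z₂‖) := by
      intro z₁ z₂
      simp only [psi, norm_div, norm_mul, Complex.norm_real, Real.norm_eq_abs,
        _root_.abs_of_nonneg (Real.sqrt_nonneg _)]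
      ring
    have hsup : supPsi (a, x₁, x₂, x₃) = ‖a‖ * (1 / Real.sqrt P) := by
      have hmem : ‖a‖ * (1 / Real.sqrt P) ∈
          {r : ℝ | ∃ z₁ z₂ : ℂ, ‖z₁‖ < 1 ∧ ‖z₂‖ < 1 ∧ r = ‖psi z₁ z₂ (a, x₁, x₂, x₃)‖} :=
        ⟨(starRingEnd ℂ) x₁, (starRingEnd ℂ) x₂,
          by simpa [RCLike.norm_conj] using h1, by simpa [RCLike.norm_conj] using h2,
          by rw [hnorm, hat]⟩
      have hb : ∀ r ∈ {r : ℝ | ∃ z₁ z₂ : ℂ, ‖z₁‖ < 1 ∧ ‖z₂‖ < 1 ∧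
          r = ‖psi z₁ z₂ (a, x₁, x₂, x₃)‖}, r ≤ ‖a‖ * (1 / Real.sqrt P) := by
        rintro r ⟨z₁, z₂, hz₁, hz₂, rfl⟩
        rw [hnorm]
        exact mul_le_mul_of_nonneg_left (hub z₁ z₂ hz₁ hz₂) (norm_nonneg a)
      exact le_antisymm (csSup_le ⟨_, hmem⟩ hb) (le_csSup ⟨_, hb⟩ hmem)
    rw [hsup, mul_one_div, div_lt_one hsP]
end
end

section
/- Let (x₁,x₂,x₃) ∈ ℂ³ satisfy x₁ = conj(x₂)·x₃, |x₃| = 1 and |x₁| < 1 (i.e. (x₁,x₂,x₃) ∈ b𝔼 with |x₁| < 1). Then 1 − x₁z₁ − x₂z₂ + x₃z₁z₂ ≠ 0 for all z₁, z₂ ∈ 𝔻, and sup_{z₁,z₂ ∈ 𝔻} √((1−|z₁|²)(1−|z₂|²)) / |1 − x₁z₁ − x₂z₂ + x₃z₁z₂| = 1/√(1−|x₁|²); the supremum is attained at (z₁,z₂) = (conj(x₁), 0). -/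
noncomputable section

open Complex

private lemma norm_sq_complex (w : ℂ) : ‖w‖ ^ 2 = Complex.normSq w := by
  rw [Complex.sq_norm]

private lemma normSq_identity (x z : ℂ) :
    ‖1 - x * z‖ ^ 2 - ‖(starRingEnd ℂ) x - z‖ ^ 2 = (1 - ‖x‖ ^ 2) * (1 - ‖z‖ ^ 2) := by
  rw [norm_sq_complex, norm_sq_complex, norm_sq_complex, norm_sq_complex]
  simp [Complex.normSq_apply, Complex.mul_re, Complex.mul_im, Complex.sub_re, Complex.sub_im,
    Complex.one_re, Complex.one_im]
  ring

private lemma key_ineq_s2 (x₁ z₁ z₂ : ℂ) (hx : ‖x₁‖ < 1) (hz₁ : ‖z₁‖ < 1) (hz₂ : ‖z₂‖ < 1) :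
    Real.sqrt (1 - ‖x₁‖ ^ 2) * Real.sqrt ((1 - ‖z₁‖ ^ 2) * (1 - ‖z₂‖ ^ 2))
      ≤ ‖1 - x₁ * z₁‖ - ‖z₂‖ * ‖(starRingEnd ℂ) x₁ - z₁‖ ∧
    0 < ‖1 - x₁ * z₁‖ - ‖z₂‖ * ‖(starRingEnd ℂ) x₁ - z₁‖ := by
  set a := ‖1 - x₁ * z₁‖ with ha_def
  set b := ‖(starRingEnd ℂ) x₁ - z₁‖ with hb_def
  set t := ‖z₂‖ with ht_def
  have hx2 : 0 < 1 - ‖x₁‖ ^ 2 := by nlinarith [norm_nonneg x₁]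
  have hz12 : 0 < 1 - ‖z₁‖ ^ 2 := by nlinarith [norm_nonneg z₁]
  have ht : 0 ≤ t := norm_nonneg _
  have ht2 : 0 < 1 - t ^ 2 := by nlinarith
  have hid : a ^ 2 - b ^ 2 = (1 - ‖x₁‖ ^ 2) * (1 - ‖z₁‖ ^ 2) := normSq_identity x₁ z₁
  have hb : 0 ≤ b := norm_nonneg _
  have hab : b ^ 2 < a ^ 2 := by nlinarith
  have ha : 0 < a := by nlinarith [norm_nonneg (1 - x₁ * z₁)]
  have hpos : 0 < a - t * b := by nlinarith
  refine ⟨?_, hpos⟩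
  have h1 : Real.sqrt (1 - ‖x₁‖ ^ 2) * Real.sqrt ((1 - ‖z₁‖ ^ 2) * (1 - ‖z₂‖ ^ 2))
      = Real.sqrt ((a ^ 2 - b ^ 2) * (1 - t ^ 2)) := by
    rw [← Real.sqrt_mul hx2.le]
    congr 1
    rw [hid]; ring
  rw [h1]
  have h2 : (a ^ 2 - b ^ 2) * (1 - t ^ 2) ≤ (a - t * b) ^ 2 := by
    nlinarith [sq_nonneg (a * t - b)]
  calc Real.sqrt ((a ^ 2 - b ^ 2) * (1 - t ^ 2)) ≤ Real.sqrt ((a - t * b) ^ 2) :=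
        Real.sqrt_le_sqrt h2
    _ = a - t * b := Real.sqrt_sq hpos.le

/-- For `(x₁,x₂,x₃) ∈ b𝔼` with `|x₁| < 1`, the denominator is nonzero on
`𝔻 × 𝔻`, the supremum of `g` over `𝔻 × 𝔻` equals `1/√(1-|x₁|²)`, and it is attained at
`(conj x₁, 0)`. -/
theorem stmt2 (x₁ x₂ x₃ : ℂ)
    (h1 : x₁ = (starRingEnd ℂ) x₂ * x₃) (h3 : ‖x₃‖ = 1) (h1' : ‖x₁‖ < 1) :
    (∀ z₁ z₂ : ℂ, ‖z₁‖ < 1 → ‖z₂‖ < 1 → hexDen (x₁, x₂, x₃) z₁ z₂ ≠ 0) ∧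
    sSup {r : ℝ | ∃ z₁ z₂ : ℂ, ‖z₁‖ < 1 ∧ ‖z₂‖ < 1 ∧
        r = Real.sqrt ((1 - ‖z₁‖ ^ 2) * (1 - ‖z₂‖ ^ 2)) / ‖hexDen (x₁, x₂, x₃) z₁ z₂‖}
      = 1 / Real.sqrt (1 - ‖x₁‖ ^ 2) ∧
    Real.sqrt ((1 - ‖(starRingEnd ℂ) x₁‖ ^ 2) * (1 - ‖(0 : ℂ)‖ ^ 2)) /
        ‖hexDen (x₁, x₂, x₃) ((starRingEnd ℂ) x₁) 0‖
      = 1 / Real.sqrt (1 - ‖x₁‖ ^ 2) := by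
  have hs : 0 < 1 - ‖x₁‖ ^ 2 := by nlinarith [norm_nonneg x₁]
  have hss : 0 < Real.sqrt (1 - ‖x₁‖ ^ 2) := Real.sqrt_pos.mpr hs
  -- x₂ = conj x₁ * x₃
  have hns3 : (Complex.normSq x₃ : ℂ) = 1 := by
    rw [← norm_sq_complex, h3]; norm_num
  have hx₂ : x₂ = (starRingEnd ℂ) x₁ * x₃ := by
    have hc : (starRingEnd ℂ) x₁ = x₂ * (starRingEnd ℂ) x₃ := by
      rw [h1, map_mul, RingHomCompTriple.comp_apply] -- conj(conj x₂ * x₃)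
      simp
    rw [hc, mul_assoc, ← Complex.normSq_eq_conj_mul_self, hns3, mul_one]
  -- factored form of the denominator
  have hfact : ∀ z₁ z₂ : ℂ, hexDen (x₁, x₂, x₃) z₁ z₂
      = (1 - x₁ * z₁) - z₂ * (x₃ * ((starRingEnd ℂ) x₁ - z₁)) := by
    intro z₁ z₂
    simp only [hexDen, hx₂]
    ring
  -- lower bound for the norm of the denominator
  have hlow : ∀ z₁ z₂ : ℂ,
      ‖1 - x₁ * z₁‖ - ‖z₂‖ * ‖(starRingEnd ℂ) x₁ - z₁‖ ≤ ‖hexDen (x₁, x₂, x₃) z₁ z₂‖ := by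
    intro z₁ z₂
    rw [hfact]
    calc ‖1 - x₁ * z₁‖ - ‖z₂‖ * ‖(starRingEnd ℂ) x₁ - z₁‖
        = ‖1 - x₁ * z₁‖ - ‖z₂ * (x₃ * ((starRingEnd ℂ) x₁ - z₁))‖ := by
          rw [norm_mul, norm_mul, h3, one_mul]
      _ ≤ _ := norm_sub_norm_le _ _
  have hne : ∀ z₁ z₂ : ℂ, ‖z₁‖ < 1 → ‖z₂‖ < 1 →
      Real.sqrt (1 - ‖x₁‖ ^ 2) * Real.sqrt ((1 - ‖z₁‖ ^ 2) * (1 - ‖z₂‖ ^ 2))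
        ≤ ‖hexDen (x₁, x₂, x₃) z₁ z₂‖ ∧ 0 < ‖hexDen (x₁, x₂, x₃) z₁ z₂‖ := by
    intro z₁ z₂ hz₁ hz₂
    obtain ⟨k1, k2⟩ := key_ineq_s2 x₁ z₁ z₂ h1' hz₁ hz₂
    exact ⟨k1.trans (hlow z₁ z₂), lt_of_lt_of_le k2 (hlow z₁ z₂)⟩
  -- value at the witness (conj x₁, 0)
  have hwit : Real.sqrt ((1 - ‖(starRingEnd ℂ) x₁‖ ^ 2) * (1 - ‖(0 : ℂ)‖ ^ 2)) /
        ‖hexDen (x₁, x₂, x₃) ((starRingEnd ℂ) x₁) 0‖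
      = 1 / Real.sqrt (1 - ‖x₁‖ ^ 2) := by
    have hd : hexDen (x₁, x₂, x₃) ((starRingEnd ℂ) x₁) 0
        = ((1 - ‖x₁‖ ^ 2 : ℝ) : ℂ) := by
      simp only [hexDen]
      rw [Complex.mul_conj]
      push_cast
      rw [← norm_sq_complex]
      push_cast
      ring
    rw [hd]
    have hnorm : ‖((1 - ‖x₁‖ ^ 2 : ℝ) : ℂ)‖ = 1 - ‖x₁‖ ^ 2 := by
      rw [Complex.norm_real, Real.norm_of_nonneg hs.le]
    rw [hnorm]
    have hcn : ‖(starRingEnd ℂ) x₁‖ = ‖x₁‖ := by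
      simp
    rw [hcn]
    simp only [norm_zero]
    rw [show (1 : ℝ) - 0 ^ 2 = 1 by norm_num, mul_one]
    rw [div_eq_div_iff hs.ne' hss.ne', Real.mul_self_sqrt hs.le, one_mul]
  refine ⟨fun z₁ z₂ hz₁ hz₂ => ?_, ?_, hwit⟩
  · exact fun h0 => by simpa [h0] using (hne z₁ z₂ hz₁ hz₂).2
  · -- the sSup
    set S := {r : ℝ | ∃ z₁ z₂ : ℂ, ‖z₁‖ < 1 ∧ ‖z₂‖ < 1 ∧
        r = Real.sqrt ((1 - ‖z₁‖ ^ 2) * (1 - ‖z₂‖ ^ 2)) / ‖hexDen (x₁, x₂, x₃) z₁ z₂‖} with hS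
    have hmem : (1 / Real.sqrt (1 - ‖x₁‖ ^ 2)) ∈ S := by
      refine ⟨(starRingEnd ℂ) x₁, 0, ?_, ?_, ?_⟩
      · simpa using h1'
      · norm_num
      · exact hwit.symm
    have hub : ∀ r ∈ S, r ≤ 1 / Real.sqrt (1 - ‖x₁‖ ^ 2) := by
      rintro r ⟨z₁, z₂, hz₁, hz₂, rfl⟩
      obtain ⟨k1, k2⟩ := hne z₁ z₂ hz₁ hz₂
      rw [div_le_div_iff₀ k2 hss, one_mul]
      calc Real.sqrt ((1 - ‖z₁‖ ^ 2) * (1 - ‖z₂‖ ^ 2)) * Real.sqrt (1 - ‖x₁‖ ^ 2)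
          = Real.sqrt (1 - ‖x₁‖ ^ 2) * Real.sqrt ((1 - ‖z₁‖ ^ 2) * (1 - ‖z₂‖ ^ 2)) := by ring
        _ ≤ _ := k1
    exact le_antisymm (csSup_le ⟨_, hmem⟩ hub) (le_csSup ⟨_, hub⟩ hmem)
end
end

section
/- For A = (a_{ij})_{i,j=1,2} ∈ M₂(ℂ) the following are equivalent: (1) μ_hexa(A) < 1; (2) 1 − a₁₁z₁ − a₂₂z₂ + (det A)·z₁z₂ ≠ a₂₁·w for all z₁, z₂, w ∈ 𝔻̄ with |w| ≤ √((1−|z₁|²)(1−|z₂|²)); (3) (a₁₁, a₂₂, det A) ∈ 𝔼 and sup_{z₁,z₂ ∈ 𝔻} |ψ_{z₁,z₂}(a₂₁, a₁₁, a₂₂, det A)| < 1; (4) (a₁₁, a₂₂, det A) ∈ 𝔼 and |a₂₁|·K_*(a₁₁, a₂₂, det A) < 1. -/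
noncomputable section

open Complex

def tri (z₁ w z₂ : ℂ) : Matrix (Fin 2) (Fin 2) ℂ := !![z₁, w; 0, z₂]

lemma tri_apply (z₁ w z₂ : ℂ) (y : EuclideanSpace ℂ (Fin 2)) :
    Matrix.toEuclideanCLM (𝕜 := ℂ) (tri z₁ w z₂) y =
      (WithLp.equiv 2 _).symm ![z₁ * y 0 + w * y 1, z₂ * y 1] := by
  have : Matrix.toEuclideanCLM (𝕜 := ℂ) (tri z₁ w z₂) y = (tri z₁ w z₂).mulVec y := rfl
  ext i
  rw [this]
  fin_cases i <;> simp [tri, Matrix.mulVec, dotProduct, Fin.sum_univ_two]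

lemma norm_pair (α β : ℂ) :
    ‖(WithLp.equiv 2 (Fin 2 → ℂ)).symm ![α, β]‖ = Real.sqrt (‖α‖^2 + ‖β‖^2) := by
  rw [EuclideanSpace.norm_eq]
  simp [Fin.sum_univ_two]

lemma key_ineq_s3 (s v c a b : ℝ) (hs : 0 ≤ s) (hv : 0 ≤ v) (hc : 0 ≤ c) (ha : 0 ≤ a)
    (hb : 0 ≤ b) (hs1 : s ≤ 1) (hv1 : v ≤ 1) (h : c^2 ≤ (1-s^2)*(1-v^2)) :
    (s*a + c*b)^2 + (v*b)^2 ≤ a^2 + b^2 := by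
  have hs2 : s^2 ≤ 1 := by nlinarith
  have hv2 : v^2 ≤ 1 := by nlinarith
  rcases eq_or_lt_of_le hc with rfl | hc0
  · nlinarith [mul_le_mul_of_nonneg_right hs2 (sq_nonneg a),
      mul_le_mul_of_nonneg_right hv2 (sq_nonneg b)]
  · have hA1 : (0:ℝ) < 1 - s^2 := by
      by_contra hcon
      push_neg at hcon
      nlinarith [mul_nonneg (by linarith : (0:ℝ) ≤ s^2 - 1) (by linarith : (0:ℝ) ≤ 1 - v^2),
        mul_pos hc0 hc0]
    have key : (1-s^2) * ((s*a + c*b)^2 + (v*b)^2) ≤ (1-s^2) * (a^2+b^2) := by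
      nlinarith [sq_nonneg ((1-s^2)*a - s*c*b),
        mul_nonneg (by linarith : (0:ℝ) ≤ (1-s^2)*(1-v^2) - c^2) (sq_nonneg b)]
    exact le_of_mul_le_mul_left key hA1

/-- P1 : sufficient condition for contractivity. -/
lemma opNorm2_tri_le (z₁ w z₂ : ℂ) (h1 : ‖z₁‖ ≤ 1) (h2 : ‖z₂‖ ≤ 1)
    (hw : ‖w‖ ≤ Real.sqrt ((1 - ‖z₁‖^2) * (1 - ‖z₂‖^2))) :
    opNorm2 (tri z₁ w z₂) ≤ 1 := by
  have hD : 0 ≤ (1 - ‖z₁‖^2) * (1 - ‖z₂‖^2) :=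
    mul_nonneg (by nlinarith [norm_nonneg z₁]) (by nlinarith [norm_nonneg z₂])
  have hw2 : ‖w‖^2 ≤ (1 - ‖z₁‖^2) * (1 - ‖z₂‖^2) := by
    calc ‖w‖^2 ≤ Real.sqrt ((1 - ‖z₁‖^2) * (1 - ‖z₂‖^2))^2 :=
          pow_le_pow_left₀ (norm_nonneg w) hw 2
    _ = _ := Real.sq_sqrt hD
  refine ContinuousLinearMap.opNorm_le_bound _ zero_le_one (fun y => ?_)
  rw [tri_apply, norm_pair, one_mul]
  have hy : ‖y‖ = Real.sqrt (‖y 0‖^2 + ‖y 1‖^2) := by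
    rw [EuclideanSpace.norm_eq]; simp [Fin.sum_univ_two]
  rw [hy]
  apply Real.sqrt_le_sqrt
  have e1 : ‖z₁ * y 0 + w * y 1‖^2 ≤ (‖z₁‖ * ‖y 0‖ + ‖w‖ * ‖y 1‖)^2 := by
    apply pow_le_pow_left₀ (norm_nonneg _)
    calc ‖z₁ * y 0 + w * y 1‖ ≤ ‖z₁ * y 0‖ + ‖w * y 1‖ := norm_add_le _ _
    _ = ‖z₁‖ * ‖y 0‖ + ‖w‖ * ‖y 1‖ := by rw [norm_mul, norm_mul]
  have e2 : ‖z₂ * y 1‖^2 = (‖z₂‖ * ‖y 1‖)^2 := by rw [norm_mul]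
  calc ‖z₁ * y 0 + w * y 1‖^2 + ‖z₂ * y 1‖^2
      ≤ (‖z₁‖ * ‖y 0‖ + ‖w‖ * ‖y 1‖)^2 + (‖z₂‖ * ‖y 1‖)^2 := by rw [e2]; linarith
    _ ≤ ‖y 0‖^2 + ‖y 1‖^2 :=
        key_ineq_s3 _ _ _ _ _ (norm_nonneg _) (norm_nonneg _) (norm_nonneg _) (norm_nonneg _)
          (norm_nonneg _) h1 h2 hw2

/-- P2 : necessary conditions from contractivity. -/
lemma opNorm2_tri_ge (z₁ w z₂ : ℂ) (h : opNorm2 (tri z₁ w z₂) ≤ 1) :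
    ‖z₁‖ ≤ 1 ∧ ‖z₂‖ ≤ 1 ∧ ‖w‖ ≤ Real.sqrt ((1 - ‖z₁‖^2) * (1 - ‖z₂‖^2)) := by
  have hy : ∀ α β : ℂ, ‖z₁ * α + w * β‖^2 + ‖z₂ * β‖^2 ≤ ‖α‖^2 + ‖β‖^2 := by
    intro α β
    have h0 := (Matrix.toEuclideanCLM (𝕜 := ℂ) (tri z₁ w z₂)).le_opNorm
      ((WithLp.equiv 2 _).symm ![α, β])
    rw [tri_apply] at h0
    have e0 : ((WithLp.equiv 2 (Fin 2 → ℂ)).symm ![α, β]) 0 = α := rfl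
    have e1 : ((WithLp.equiv 2 (Fin 2 → ℂ)).symm ![α, β]) 1 = β := rfl
    rw [e0, e1, norm_pair, norm_pair] at h0
    have h0' : Real.sqrt (‖z₁ * α + w * β‖^2 + ‖z₂ * β‖^2) ≤ Real.sqrt (‖α‖^2 + ‖β‖^2) := by
      calc Real.sqrt (‖z₁ * α + w * β‖^2 + ‖z₂ * β‖^2)
          ≤ opNorm2 (tri z₁ w z₂) * Real.sqrt (‖α‖^2 + ‖β‖^2) := h0
        _ ≤ 1 * Real.sqrt (‖α‖^2 + ‖β‖^2) := by
            apply mul_le_mul_of_nonneg_right h (Real.sqrt_nonneg _)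
        _ = _ := one_mul _
    nlinarith [Real.sq_sqrt (by positivity : (0:ℝ) ≤ ‖α‖^2 + ‖β‖^2),
      Real.sqrt_nonneg (‖z₁ * α + w * β‖^2 + ‖z₂ * β‖^2),
      Real.sq_sqrt (by positivity : (0:ℝ) ≤ ‖z₁ * α + w * β‖^2 + ‖z₂ * β‖^2), h0',
      Real.sqrt_nonneg (‖α‖^2 + ‖β‖^2)]
  have hz1 : ‖z₁‖ ≤ 1 := by
    have h10 := hy 1 0
    simp only [mul_one, mul_zero, add_zero, norm_zero, norm_one] at h10
    nlinarith [norm_nonneg z₁]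
  have hC := hy 0 1
  rw [mul_zero, mul_one, mul_one, zero_add, norm_zero, norm_one] at hC
  have hz2 : ‖z₂‖ ≤ 1 := by nlinarith [norm_nonneg z₂, sq_nonneg ‖w‖]
  refine ⟨hz1, hz2, ?_⟩
  -- the general instantiation
  have E : ∀ t s : ℝ, 0 ≤ t → 0 ≤ s →
      ((t*‖z₁‖^2 + s)*‖w‖)^2 + (‖z₂‖*s)^2 ≤ (t*‖z₁‖*‖w‖)^2 + s^2 := by
    intro t s ht hs
    have := hy ((t:ℂ) * (starRingEnd ℂ) z₁ * w) ((s:ℂ))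
    have ec : z₁ * ((t:ℂ) * (starRingEnd ℂ) z₁ * w) + w * (s:ℂ)
        = (((t*‖z₁‖^2 + s : ℝ)):ℂ) * w := by
      have : z₁ * (starRingEnd ℂ) z₁ = ((‖z₁‖^2 : ℝ) : ℂ) := by
        rw [Complex.mul_conj]
        norm_cast
        rw [Complex.normSq_eq_norm_sq]
      rw [show z₁ * ((t:ℂ) * (starRingEnd ℂ) z₁ * w) = (z₁ * (starRingEnd ℂ) z₁) * ((t:ℂ) * w) by ring, this]
      push_cast
      ring
    rw [ec] at this
    have n1 : ‖(((t*‖z₁‖^2 + s : ℝ)):ℂ) * w‖ = (t*‖z₁‖^2 + s) * ‖w‖ := by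
      rw [norm_mul, Complex.norm_real, Real.norm_of_nonneg (by positivity)]
    have n2 : ‖z₂ * (s:ℂ)‖ = ‖z₂‖ * s := by
      rw [norm_mul, Complex.norm_real, Real.norm_of_nonneg hs]
    have n3 : ‖(t:ℂ) * (starRingEnd ℂ) z₁ * w‖ = t*‖z₁‖*‖w‖ := by
      rw [norm_mul, norm_mul, Complex.norm_real, RCLike.norm_conj, Real.norm_of_nonneg ht]
    have n4 : ‖(s:ℂ)‖ = s := by rw [Complex.norm_real, Real.norm_of_nonneg hs]
    rw [n1, n2, n3, n4] at this
    exact this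
  have I1 := E 1 (1 - ‖z₁‖^2) zero_le_one (by nlinarith [norm_nonneg z₁])
  have I2 := E 1 (‖w‖^2) zero_le_one (sq_nonneg _)
  have goal2 : ‖w‖^2 ≤ (1 - ‖z₁‖^2) * (1 - ‖z₂‖^2) := by
    rcases lt_or_eq_of_le hz1 with hu | hu
    · have hu1 : (0:ℝ) < 1 - ‖z₁‖^2 := by nlinarith [norm_nonneg z₁]
      nlinarith [I1, hu1, mul_pos hu1 hu1]
    · rw [hu]
      rw [hu] at I2
      nlinarith [sq_nonneg (‖w‖^2), sq_nonneg ‖w‖, sq_nonneg (‖z₂‖*‖w‖^2), sq_nonneg ‖z₂‖]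
  calc ‖w‖ = Real.sqrt (‖w‖^2) := (Real.sqrt_sq (norm_nonneg w)).symm
    _ ≤ _ := Real.sqrt_le_sqrt goal2

lemma det_formula (A : Matrix (Fin 2) (Fin 2) ℂ) (z₁ w z₂ : ℂ) :
    (1 - A * tri z₁ w z₂).det = hexDen (A 0 0, A 1 1, A.det) z₁ z₂ - A 1 0 * w := by
  simp [Matrix.det_fin_two, Matrix.mul_apply, Fin.sum_univ_two, hexDen, tri,
    Matrix.sub_apply, Matrix.one_apply]
  ring

lemma tri_eta (X : Matrix (Fin 2) (Fin 2) ℂ) (h : X 1 0 = 0) :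
    X = tri (X 0 0) (X 0 1) (X 1 1) := by
  ext i j
  fin_cases i <;> fin_cases j <;> simp [tri, h]

lemma tri_decomp (z₁ w z₂ : ℂ) :
    tri z₁ w z₂ = z₁ • !![(1:ℂ),0;0,0] + w • !![(0:ℂ),1;0,0] + z₂ • !![(0:ℂ),0;0,1] := by
  ext i j
  fin_cases i <;> fin_cases j <;> simp [tri]

lemma continuous_opNorm2_tri :
    Continuous (fun p : ℂ × ℂ × ℂ => opNorm2 (tri p.1 p.2.1 p.2.2)) := by
  have : ∀ p : ℂ × ℂ × ℂ, opNorm2 (tri p.1 p.2.1 p.2.2) =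
      ‖p.1 • Matrix.toEuclideanCLM (𝕜 := ℂ) !![(1:ℂ),0;0,0]
        + p.2.1 • Matrix.toEuclideanCLM (𝕜 := ℂ) !![(0:ℂ),1;0,0]
        + p.2.2 • Matrix.toEuclideanCLM (𝕜 := ℂ) !![(0:ℂ),0;0,1]‖ := by
    intro p
    rw [opNorm2, tri_decomp, map_add, map_add, map_smul, map_smul, map_smul]
  simp_rw [this]
  fun_prop


lemma entries_le_opNorm2 (z₁ w z₂ : ℂ) :
    ‖z₁‖ ≤ opNorm2 (tri z₁ w z₂) ∧ ‖w‖ ≤ opNorm2 (tri z₁ w z₂) ∧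
      ‖z₂‖ ≤ opNorm2 (tri z₁ w z₂) := by
  have key : ∀ α β : ℂ, Real.sqrt (‖z₁ * α + w * β‖^2 + ‖z₂ * β‖^2)
      ≤ opNorm2 (tri z₁ w z₂) * Real.sqrt (‖α‖^2 + ‖β‖^2) := by
    intro α β
    have h0 := (Matrix.toEuclideanCLM (𝕜 := ℂ) (tri z₁ w z₂)).le_opNorm
      ((WithLp.equiv 2 _).symm ![α, β])
    rw [tri_apply] at h0
    have e0 : ((WithLp.equiv 2 (Fin 2 → ℂ)).symm ![α, β]) 0 = α := rfl
    have e1 : ((WithLp.equiv 2 (Fin 2 → ℂ)).symm ![α, β]) 1 = β := rfl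
    rw [e0, e1, norm_pair, norm_pair] at h0
    exact h0
  have k1 := key 1 0
  have k2 := key 0 1
  simp only [mul_one, mul_zero, add_zero, zero_add, norm_zero, norm_one, one_pow,
    zero_pow, Real.sqrt_one, mul_one, OfNat.ofNat_ne_zero, ne_eq, not_false_iff] at k1 k2
  rw [Real.sqrt_sq (norm_nonneg _)] at k1
  constructor
  · exact k1
  have hle : ∀ x y : ℝ, 0 ≤ x → 0 ≤ y → x ≤ Real.sqrt (x^2 + y^2) := by
    intro x y hx hy
    have h' := Real.sqrt_le_sqrt (show x^2 ≤ x^2 + y^2 by nlinarith)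
    rwa [Real.sqrt_sq hx] at h'
  constructor
  · exact le_trans (hle _ _ (norm_nonneg w) (norm_nonneg z₂)) k2
  · have h' := Real.sqrt_le_sqrt (show ‖z₂‖^2 ≤ ‖w‖^2 + ‖z₂‖^2 by nlinarith [sq_nonneg ‖w‖])
    rw [Real.sqrt_sq (norm_nonneg _)] at h'
    exact le_trans h' k2


lemma compact_min_gap (d : ℂ × ℂ × ℂ → ℂ) (hdc : Continuous d)
    (hyp : ∀ p : ℂ × ℂ × ℂ, d p = 0 → 1 < opNorm2 (tri p.1 p.2.1 p.2.2)) :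
    ∃ m : ℝ, 1 < m ∧ ∀ p : ℂ × ℂ × ℂ, d p = 0 → m ≤ opNorm2 (tri p.1 p.2.1 p.2.2) := by
  have hgc : Continuous (fun p : ℂ × ℂ × ℂ => opNorm2 (tri p.1 p.2.1 p.2.2)) :=
    continuous_opNorm2_tri
  have hKc : IsCompact {p : ℂ × ℂ × ℂ | d p = 0 ∧ opNorm2 (tri p.1 p.2.1 p.2.2) ≤ 2} := by
    apply Metric.isCompact_of_isClosed_isBounded
    · exact (isClosed_eq hdc continuous_const).inter (isClosed_le hgc continuous_const)
    · apply Bornology.IsBounded.subset (Metric.isBounded_closedBall (x := (0 : ℂ × ℂ × ℂ)) (r := 2))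
      rintro p ⟨-, hp2⟩
      obtain ⟨e1, e2, e3⟩ := entries_le_opNorm2 p.1 p.2.1 p.2.2
      rw [Metric.mem_closedBall, dist_zero_right]
      rw [Prod.norm_def, Prod.norm_def]
      simp only [sup_le_iff]
      exact ⟨le_trans e1 hp2, le_trans e2 hp2, le_trans e3 hp2⟩
  rcases Set.eq_empty_or_nonempty {p : ℂ × ℂ × ℂ | d p = 0 ∧ opNorm2 (tri p.1 p.2.1 p.2.2) ≤ 2}
    with he | hne
  · refine ⟨2, one_lt_two, fun p hdet => ?_⟩
    by_contra hcon
    push_neg at hcon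
    have hmem : p ∈ {p : ℂ × ℂ × ℂ | d p = 0 ∧ opNorm2 (tri p.1 p.2.1 p.2.2) ≤ 2} :=
      ⟨hdet, le_of_lt hcon⟩
    rw [he] at hmem
    exact hmem
  · obtain ⟨pstar, hpK, hmin⟩ := hKc.exists_isMinOn hne hgc.continuousOn
    rw [isMinOn_iff] at hmin
    have hm1 : 1 < opNorm2 (tri pstar.1 pstar.2.1 pstar.2.2) := hyp _ hpK.1
    refine ⟨min (opNorm2 (tri pstar.1 pstar.2.1 pstar.2.2)) 2,
      lt_min hm1 one_lt_two, fun p hdet => ?_⟩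
    by_cases hcase : opNorm2 (tri p.1 p.2.1 p.2.2) ≤ 2
    · exact le_trans (min_le_left _ _) (hmin p ⟨hdet, hcase⟩)
    · push_neg at hcase
      exact le_trans (min_le_right _ _) (le_of_lt hcase)

lemma muHexa_lt_one_of (A : Matrix (Fin 2) (Fin 2) ℂ)
    (hyp : ∀ z₁ w z₂ : ℂ, (1 - A * tri z₁ w z₂).det = 0 → 1 < opNorm2 (tri z₁ w z₂)) :
    muHexa A < 1 := by
  rw [muHexa, ENNReal.inv_lt_one]
  obtain ⟨m, hm1, hm⟩ := compact_min_gap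
    (fun p => (1 - A * tri p.1 p.2.1 p.2.2).det)
    (by
      have : (fun p : ℂ × ℂ × ℂ => (1 - A * tri p.1 p.2.1 p.2.2).det)
          = fun p : ℂ × ℂ × ℂ => hexDen (A 0 0, A 1 1, A.det) p.1 p.2.2 - A 1 0 * p.2.1 := by
        funext p; exact det_formula A _ _ _
      rw [this]
      unfold hexDen
      fun_prop)
    (fun p hp => hyp p.1 p.2.1 p.2.2 hp)
  refine lt_of_lt_of_le (b := ENNReal.ofReal m) ?_ (le_sInf ?_)
  · rw [show (1:ENNReal) = ENNReal.ofReal 1 by simp]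
    exact (ENNReal.ofReal_lt_ofReal_iff (by linarith)).mpr hm1
  · rintro r ⟨X, h10, hdet, rfl⟩
    rw [tri_eta X h10] at hdet ⊢
    exact ENNReal.ofReal_le_ofReal (hm (X 0 0, X 0 1, X 1 1) hdet)

lemma exists_max_f0 (x : ℂ × ℂ × ℂ) (hx : x ∈ tetrablock) :
    ∃ M : ℝ, 0 ≤ M ∧ (∀ z₁ z₂ : ℂ, ‖z₁‖ ≤ 1 → ‖z₂‖ ≤ 1 →
      Real.sqrt ((1 - ‖z₁‖^2) * (1 - ‖z₂‖^2)) / ‖hexDen x z₁ z₂‖ ≤ M) ∧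
    (∃ ζ₁ ζ₂ : ℂ, ‖ζ₁‖ ≤ 1 ∧ ‖ζ₂‖ ≤ 1 ∧
      M = Real.sqrt ((1 - ‖ζ₁‖^2) * (1 - ‖ζ₂‖^2)) / ‖hexDen x ζ₁ ζ₂‖) := by
  set K : Set (ℂ × ℂ) := Metric.closedBall (0:ℂ) 1 ×ˢ Metric.closedBall (0:ℂ) 1 with hKdef
  have hKc : IsCompact K := (isCompact_closedBall _ _).prod (isCompact_closedBall _ _)
  have hmem : ∀ z : ℂ × ℂ, z ∈ K ↔ (‖z.1‖ ≤ 1 ∧ ‖z.2‖ ≤ 1) := by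
    intro z
    rw [hKdef, Set.mem_prod, Metric.mem_closedBall, Metric.mem_closedBall,
      dist_zero_right, dist_zero_right]
  have hfc : ContinuousOn (fun z : ℂ × ℂ =>
      Real.sqrt ((1 - ‖z.1‖^2) * (1 - ‖z.2‖^2)) / ‖hexDen x z.1 z.2‖) K := by
    apply ContinuousOn.div
    · apply Continuous.continuousOn
      apply Real.continuous_sqrt.comp
      fun_prop
    · apply Continuous.continuousOn
      unfold hexDen
      fun_prop
    · intro z hz
      rw [hmem] at hz
      exact norm_ne_zero_iff.mpr (hx z.1 z.2 hz.1 hz.2)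
  have hne : K.Nonempty := ⟨(0,0), by rw [hmem]; norm_num⟩
  obtain ⟨zs, hzsK, hmax⟩ := hKc.exists_isMaxOn hne hfc
  rw [isMaxOn_iff] at hmax
  rw [hmem] at hzsK
  refine ⟨_, by positivity, ?_, zs.1, zs.2, hzsK.1, hzsK.2, rfl⟩
  intro z₁ z₂ h1 h2
  exact hmax (z₁, z₂) (by rw [hmem]; exact ⟨h1, h2⟩)

lemma norm_psi (z₁ z₂ : ℂ) (q : ℂ × ℂ × ℂ × ℂ) :
    ‖psi z₁ z₂ q‖ = ‖q.1‖ *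
      (Real.sqrt ((1 - ‖z₁‖^2) * (1 - ‖z₂‖^2)) / ‖hexDen q.2 z₁ z₂‖) := by
  rw [psi, norm_div, norm_mul, Complex.norm_real,
    Real.norm_of_nonneg (Real.sqrt_nonneg _), mul_div_assoc]

/-- Characterizations of `μ_hexa(A) < 1`. -/
theorem stmt3 (A : Matrix (Fin 2) (Fin 2) ℂ) :
    List.TFAE [
      muHexa A < 1,
      ∀ z₁ z₂ w : ℂ, ‖z₁‖ ≤ 1 → ‖z₂‖ ≤ 1 → ‖w‖ ≤ 1 →
        ‖w‖ ≤ Real.sqrt ((1 - ‖z₁‖ ^ 2) * (1 - ‖z₂‖ ^ 2)) →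
        1 - A 0 0 * z₁ - A 1 1 * z₂ + A.det * z₁ * z₂ ≠ A 1 0 * w,
      (A 0 0, A 1 1, A.det) ∈ tetrablock ∧
        supPsi (A 1 0, A 0 0, A 1 1, A.det) < 1,
      (A 0 0, A 1 1, A.det) ∈ tetrablock ∧
        ‖A 1 0‖ * Kstar (A 0 0, A 1 1, A.det) < 1 ] := by
  tfae_have 1 → 2 := by
    intro h1 z₁ z₂ w hz1 hz2 hw1 hw2 heq
    have hdet : (1 - A * tri z₁ w z₂).det = 0 := by
      rw [det_formula]
      have : hexDen (A 0 0, A 1 1, A.det) z₁ z₂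
          = 1 - A 0 0 * z₁ - A 1 1 * z₂ + A.det * z₁ * z₂ := rfl
      rw [this, heq, sub_self]
    have hop := opNorm2_tri_le z₁ w z₂ hz1 hz2 hw2
    rw [muHexa, ENNReal.inv_lt_one] at h1
    have hmem : ENNReal.ofReal (opNorm2 (tri z₁ w z₂)) ∈
        {r : ENNReal | ∃ X : Matrix (Fin 2) (Fin 2) ℂ,
          X 1 0 = 0 ∧ (1 - A * X).det = 0 ∧ r = ENNReal.ofReal (opNorm2 X)} :=
      ⟨tri z₁ w z₂, by simp [tri], hdet, rfl⟩
    have hle : sInf {r : ENNReal | ∃ X : Matrix (Fin 2) (Fin 2) ℂ,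
          X 1 0 = 0 ∧ (1 - A * X).det = 0 ∧ r = ENNReal.ofReal (opNorm2 X)} ≤ 1 :=
      le_trans (sInf_le hmem) (ENNReal.ofReal_le_one.mpr hop)
    exact absurd h1 (not_lt.mpr hle)
  tfae_have 2 → 3 := by
    intro h2
    have hT : (A 0 0, A 1 1, A.det) ∈ tetrablock := by
      intro z₁ z₂ hz1 hz2
      have h := h2 z₁ z₂ 0 hz1 hz2 (by simp) (by simp [Real.sqrt_nonneg])
      rw [mul_zero] at h
      intro hc
      exact h (by rw [← hc]; rfl)
    refine ⟨hT, ?_⟩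
    obtain ⟨M, hM0, hMb, ζ₁, ζ₂, hζ1, hζ2, hMeq⟩ := exists_max_f0 _ hT
    have hden : hexDen (A 0 0, A 1 1, A.det) ζ₁ ζ₂ ≠ 0 := hT ζ₁ ζ₂ hζ1 hζ2
    have hdpos : 0 < ‖hexDen (A 0 0, A 1 1, A.det) ζ₁ ζ₂‖ := norm_pos_iff.mpr hden
    have hstrict : ‖A 1 0‖ * M < 1 := by
      by_contra hcon
      push_neg at hcon
      have ha : A 1 0 ≠ 0 := by
        intro h0
        rw [h0, norm_zero, zero_mul] at hcon
        linarith
      have hapos : 0 < ‖A 1 0‖ := norm_pos_iff.mpr ha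
      set d : ℝ := ‖hexDen (A 0 0, A 1 1, A.det) ζ₁ ζ₂‖ with hd
      set D : ℝ := (1 - ‖ζ₁‖^2) * (1 - ‖ζ₂‖^2) with hD
      have hineq : d ≤ ‖A 1 0‖ * Real.sqrt D := by
        rw [hMeq, ← mul_div_assoc] at hcon
        exact (one_le_div hdpos).mp hcon
      set w : ℂ := hexDen (A 0 0, A 1 1, A.det) ζ₁ ζ₂ / A 1 0 with hw
      have hnw : ‖w‖ = d / ‖A 1 0‖ := by rw [hw, norm_div]
      have hwD : ‖w‖ ≤ Real.sqrt D := by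
        rw [hnw, div_le_iff₀ hapos]
        linarith [hineq]
      have hD1 : Real.sqrt D ≤ 1 := by
        rw [show (1:ℝ) = Real.sqrt 1 by rw [Real.sqrt_one]]
        apply Real.sqrt_le_sqrt
        rw [hD]
        have hu : ‖ζ₁‖^2 ≤ 1 := by nlinarith [norm_nonneg ζ₁]
        have hv : ‖ζ₂‖^2 ≤ 1 := by nlinarith [norm_nonneg ζ₂]
        nlinarith [sq_nonneg ‖ζ₁‖, sq_nonneg ‖ζ₂‖,
          mul_le_mul_of_nonneg_left hv (sq_nonneg ‖ζ₁‖)]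
      have heq : 1 - A 0 0 * ζ₁ - A 1 1 * ζ₂ + A.det * ζ₁ * ζ₂ = A 1 0 * w := by
        have h' : A 1 0 * w = hexDen (A 0 0, A 1 1, A.det) ζ₁ ζ₂ := by
          rw [hw]
          field_simp
        rw [h']
        rfl
      exact h2 ζ₁ ζ₂ w hζ1 hζ2 (le_trans hwD hD1) (by rw [← hD]; exact hwD) heq
    apply lt_of_le_of_lt _ hstrict
    apply Real.sSup_le
    · rintro r ⟨z₁, z₂, h1, h2', rfl⟩
      rw [norm_psi]
      exact mul_le_mul_of_nonneg_left (hMb z₁ z₂ h1.le h2'.le) (norm_nonneg _)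
    · exact mul_nonneg (norm_nonneg _) hM0
  tfae_have 3 → 4 := by
    rintro ⟨hT, hsup⟩
    refine ⟨hT, ?_⟩
    obtain ⟨M, hM0, hMb, -⟩ := exists_max_f0 _ hT
    by_cases ha : A 1 0 = 0
    · rw [ha, norm_zero, zero_mul]
      exact one_pos
    · have hapos : 0 < ‖A 1 0‖ := norm_pos_iff.mpr ha
      have hbdd : BddAbove {r : ℝ | ∃ z₁ z₂ : ℂ, ‖z₁‖ < 1 ∧ ‖z₂‖ < 1 ∧
          r = ‖psi z₁ z₂ (A 1 0, A 0 0, A 1 1, A.det)‖} := by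
        refine ⟨‖A 1 0‖ * M, ?_⟩
        rintro r ⟨z₁, z₂, h1, h2, rfl⟩
        rw [norm_psi]
        exact mul_le_mul_of_nonneg_left (hMb z₁ z₂ h1.le h2.le) (norm_nonneg _)
      have hsup0 : 0 ≤ supPsi (A 1 0, A 0 0, A 1 1, A.det) := by
        have h00 : ‖psi 0 0 (A 1 0, A 0 0, A 1 1, A.det)‖ ∈
            {r : ℝ | ∃ z₁ z₂ : ℂ, ‖z₁‖ < 1 ∧ ‖z₂‖ < 1 ∧
              r = ‖psi z₁ z₂ (A 1 0, A 0 0, A 1 1, A.det)‖} :=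
          ⟨0, 0, by norm_num, by norm_num, rfl⟩
        exact le_trans (norm_nonneg _) (le_csSup hbdd h00)
      have hKle : Kstar (A 0 0, A 1 1, A.det) ≤
          supPsi (A 1 0, A 0 0, A 1 1, A.det) / ‖A 1 0‖ := by
        apply Real.sSup_le
        · rintro r ⟨z₁, z₂, h1, h2, rfl⟩
          rw [le_div_iff₀ hapos]
          have hmem : ‖psi z₁ z₂ (A 1 0, A 0 0, A 1 1, A.det)‖ ∈
              {r : ℝ | ∃ z₁ z₂ : ℂ, ‖z₁‖ < 1 ∧ ‖z₂‖ < 1 ∧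
                r = ‖psi z₁ z₂ (A 1 0, A 0 0, A 1 1, A.det)‖} := ⟨z₁, z₂, h1, h2, rfl⟩
          have := le_csSup hbdd hmem
          rw [norm_psi] at this
          calc Real.sqrt ((1 - ‖z₁‖^2) * (1 - ‖z₂‖^2)) / ‖hexDen (A 0 0, A 1 1, A.det) z₁ z₂‖
                * ‖A 1 0‖
              = ‖A 1 0‖ * (Real.sqrt ((1 - ‖z₁‖^2) * (1 - ‖z₂‖^2)) /
                ‖hexDen (A 0 0, A 1 1, A.det) z₁ z₂‖) := by ring
            _ ≤ _ := this
        · positivity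
      calc ‖A 1 0‖ * Kstar (A 0 0, A 1 1, A.det)
          ≤ ‖A 1 0‖ * (supPsi (A 1 0, A 0 0, A 1 1, A.det) / ‖A 1 0‖) :=
            mul_le_mul_of_nonneg_left hKle (norm_nonneg _)
        _ = supPsi (A 1 0, A 0 0, A 1 1, A.det) := by
            rw [mul_comm, div_mul_cancel₀ _ (ne_of_gt hapos)]
        _ < 1 := hsup
  tfae_have 4 → 1 := by
    rintro ⟨hT, hK⟩
    apply muHexa_lt_one_of
    intro z₁ w z₂ hdet
    by_contra hcon
    push_neg at hcon
    obtain ⟨hz1, hz2, hw⟩ := opNorm2_tri_ge z₁ w z₂ hcon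
    rw [det_formula, sub_eq_zero] at hdet
    have hden : hexDen (A 0 0, A 1 1, A.det) z₁ z₂ ≠ 0 := hT z₁ z₂ hz1 hz2
    by_cases hlt : ‖z₁‖ < 1 ∧ ‖z₂‖ < 1
    · obtain ⟨h1, h2⟩ := hlt
      have ha : A 1 0 ≠ 0 := by
        intro h0
        rw [h0, zero_mul] at hdet
        exact hden hdet
      have hwne : w ≠ 0 := by
        intro h0
        rw [h0, mul_zero] at hdet
        exact hden hdet
      have hapos : 0 < ‖A 1 0‖ := norm_pos_iff.mpr ha
      have hwpos : 0 < ‖w‖ := norm_pos_iff.mpr hwne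
      have hdpos : 0 < ‖hexDen (A 0 0, A 1 1, A.det) z₁ z₂‖ := norm_pos_iff.mpr hden
      have hDpos : 0 < Real.sqrt ((1 - ‖z₁‖^2) * (1 - ‖z₂‖^2)) := lt_of_lt_of_le hwpos hw
      have hdle : ‖hexDen (A 0 0, A 1 1, A.det) z₁ z₂‖
          ≤ ‖A 1 0‖ * Real.sqrt ((1 - ‖z₁‖^2) * (1 - ‖z₂‖^2)) := by
        rw [hdet, norm_mul]
        exact mul_le_mul_of_nonneg_left hw (norm_nonneg _)
      obtain ⟨M, hM0, hMb, -⟩ := exists_max_f0 _ hT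
      have hbdd : BddAbove {r : ℝ | ∃ z₁ z₂ : ℂ, ‖z₁‖ < 1 ∧ ‖z₂‖ < 1 ∧
          r = Real.sqrt ((1 - ‖z₁‖ ^ 2) * (1 - ‖z₂‖ ^ 2)) /
            ‖hexDen (A 0 0, A 1 1, A.det) z₁ z₂‖} := by
        refine ⟨M, ?_⟩
        rintro r ⟨y₁, y₂, hy1, hy2, rfl⟩
        exact hMb y₁ y₂ hy1.le hy2.le
      have hmem : Real.sqrt ((1 - ‖z₁‖ ^ 2) * (1 - ‖z₂‖ ^ 2)) /
          ‖hexDen (A 0 0, A 1 1, A.det) z₁ z₂‖ ∈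
          {r : ℝ | ∃ z₁ z₂ : ℂ, ‖z₁‖ < 1 ∧ ‖z₂‖ < 1 ∧
            r = Real.sqrt ((1 - ‖z₁‖ ^ 2) * (1 - ‖z₂‖ ^ 2)) /
              ‖hexDen (A 0 0, A 1 1, A.det) z₁ z₂‖} := ⟨z₁, z₂, h1, h2, rfl⟩
      have hKge : 1 / ‖A 1 0‖ ≤ Kstar (A 0 0, A 1 1, A.det) := by
        refine le_trans ?_ (le_csSup hbdd hmem)
        rw [div_le_div_iff₀ hapos hdpos, one_mul]
        calc ‖hexDen (A 0 0, A 1 1, A.det) z₁ z₂‖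
            ≤ ‖A 1 0‖ * Real.sqrt ((1 - ‖z₁‖^2) * (1 - ‖z₂‖^2)) := hdle
          _ = Real.sqrt ((1 - ‖z₁‖ ^ 2) * (1 - ‖z₂‖ ^ 2)) * ‖A 1 0‖ := by ring
      have : 1 ≤ ‖A 1 0‖ * Kstar (A 0 0, A 1 1, A.det) := by
        rw [div_le_iff₀ hapos] at hKge
        linarith [hKge, mul_comm (‖A 1 0‖) (Kstar (A 0 0, A 1 1, A.det))]
      linarith
    · rcases not_and_or.mp hlt with hb | hb
      all_goals push_neg at hb
      · have he : ‖z₁‖ = 1 := le_antisymm hz1 hb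
        have hD0 : (1 - ‖z₁‖^2) * (1 - ‖z₂‖^2) = 0 := by rw [he]; ring
        rw [hD0, Real.sqrt_zero] at hw
        have : w = 0 := norm_le_zero_iff.mp hw
        rw [this, mul_zero] at hdet
        exact hden hdet
      · have he : ‖z₂‖ = 1 := le_antisymm hz2 hb
        have hD0 : (1 - ‖z₁‖^2) * (1 - ‖z₂‖^2) = 0 := by rw [he]; ring
        rw [hD0, Real.sqrt_zero] at hw
        have : w = 0 := norm_le_zero_iff.mp hw
        rw [this, mul_zero] at hdet
        exact hden hdet
  tfae_finish
end
end

section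
/- For (a, x₁, x₂, x₃) ∈ ℂ⁴ the following are equivalent: (1) (a, x₁, x₂, x₃) ∈ ℍ_μ; (2) (x₁,x₂,x₃) ∈ 𝔼, |a|·K_*(x₁,x₂,x₃) < 1, and in case a = 0 additionally x₁x₂ = x₃. Consequently ℍ_μ ∩ ({0} × 𝔼) = {(0, x₁, x₂, x₃) ∈ ℍ_μ : x₁x₂ = x₃}. -/
noncomputable section

open Complex
set_option maxHeartbeats 1000000
set_option synthInstance.maxHeartbeats 400000

theorem key_ineq_s4 {p Q r u w : ℝ} (hp0 : 0 ≤ p) (hp : p ≤ 1) (hr0 : 0 ≤ r) (hr : r ≤ 1)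
    (hQ : 0 ≤ Q) (hu : 0 ≤ u) (hw : 0 ≤ w) (h : Q^2 ≤ (1-p^2)*(1-r^2)) :
    (p*u + Q*w)^2 + r^2*w^2 ≤ u^2 + w^2 := by
  rcases eq_or_lt_of_le hr with hr1 | hr1
  · subst hr1
    have hQ0 : Q = 0 := by nlinarith
    subst hQ0
    nlinarith [mul_nonneg hp0 hu, sq_nonneg u, mul_le_one₀ hp hp0 hp, sq_nonneg (u - p*u), mul_nonneg (mul_nonneg hp0 hp0) (mul_nonneg hu hu)]
  · have h1 : 0 < 1 - r^2 := by nlinarith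
    have hd : 0 ≤ (1-p^2)*(1-r^2) - Q^2 := by linarith
    nlinarith [sq_nonneg (p*w*(1-r^2) - Q*u),
      mul_nonneg hd (add_nonneg (sq_nonneg u) (mul_nonneg h1.le (sq_nonneg w)))]

lemma norm_euclid (v : Fin 2 → ℂ) :
    ‖(WithLp.equiv 2 (Fin 2 → ℂ)).symm v‖ = Real.sqrt (‖v 0‖^2 + ‖v 1‖^2) := by
  rw [EuclideanSpace.norm_eq]
  simp [Fin.sum_univ_two]

lemma Matrix.toEuclideanCLM_piLp_equiv_symm (A : Matrix (Fin 2) (Fin 2) ℂ) (x : Fin 2 → ℂ) :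
    Matrix.toEuclideanCLM (𝕜 := ℂ) A ((WithLp.equiv 2 (Fin 2 → ℂ)).symm x) =
      (WithLp.equiv 2 (Fin 2 → ℂ)).symm (Matrix.toLin' A x) := rfl

lemma opNorm2_le_one_iff (A : Matrix (Fin 2) (Fin 2) ℂ) : opNorm2 A ≤ 1 ↔
    ∀ v : Fin 2 → ℂ, ‖A.mulVec v 0‖^2 + ‖A.mulVec v 1‖^2 ≤ ‖v 0‖^2 + ‖v 1‖^2 := by
  constructor
  · intro h v
    have h2 := (Matrix.toEuclideanCLM (𝕜 := ℂ) A).le_opNorm ((WithLp.equiv 2 _).symm v)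
    rw [Matrix.toEuclideanCLM_piLp_equiv_symm, norm_euclid, norm_euclid] at h2
    have h3 : Real.sqrt (‖A.mulVec v 0‖^2 + ‖A.mulVec v 1‖^2) ≤
        Real.sqrt (‖v 0‖^2 + ‖v 1‖^2) := by
      calc _ ≤ opNorm2 A * Real.sqrt (‖v 0‖^2 + ‖v 1‖^2) := h2
        _ ≤ 1 * Real.sqrt (‖v 0‖^2 + ‖v 1‖^2) := by
            apply mul_le_mul_of_nonneg_right h (Real.sqrt_nonneg _)
        _ = _ := one_mul _
    have ha : (0:ℝ) ≤ ‖A.mulVec v 0‖^2 + ‖A.mulVec v 1‖^2 := by positivity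
    have hb : (0:ℝ) ≤ ‖v 0‖^2 + ‖v 1‖^2 := by positivity
    calc ‖A.mulVec v 0‖^2 + ‖A.mulVec v 1‖^2
        = Real.sqrt (‖A.mulVec v 0‖^2 + ‖A.mulVec v 1‖^2) ^ 2 := (Real.sq_sqrt ha).symm
      _ ≤ Real.sqrt (‖v 0‖^2 + ‖v 1‖^2) ^ 2 := by
          exact pow_le_pow_left₀ (Real.sqrt_nonneg _) h3 2
      _ = _ := Real.sq_sqrt hb
  · intro h
    apply ContinuousLinearMap.opNorm_le_bound _ zero_le_one
    intro v
    obtain ⟨w, rfl⟩ : ∃ w : Fin 2 → ℂ, (WithLp.equiv 2 (Fin 2 → ℂ)).symm w = v :=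
      ⟨WithLp.equiv 2 _ v, by simp⟩
    rw [Matrix.toEuclideanCLM_piLp_equiv_symm, norm_euclid, norm_euclid, one_mul]
    exact Real.sqrt_le_sqrt (h w)

lemma entry_le_opNorm2 (A : Matrix (Fin 2) (Fin 2) ℂ) (i j : Fin 2) :
    ‖A i j‖ ≤ opNorm2 A := by
  have h2 := (Matrix.toEuclideanCLM (𝕜 := ℂ) A).le_opNorm ((WithLp.equiv 2 _).symm (Pi.single j 1))
  rw [Matrix.toEuclideanCLM_piLp_equiv_symm, norm_euclid, norm_euclid] at h2
  have hmv : Matrix.toLin' A (Pi.single j 1) = fun i => A i j := by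
    ext i
    simp [Matrix.toLin'_apply, Matrix.mulVec_single]
  rw [hmv] at h2
  have h1 : Real.sqrt (‖(Pi.single j (1:ℂ) : Fin 2 → ℂ) 0‖^2 + ‖(Pi.single j (1:ℂ) : Fin 2 → ℂ) 1‖^2) = 1 := by
    fin_cases j <;> simp
  rw [h1, mul_one] at h2
  calc ‖A i j‖ = Real.sqrt (‖A i j‖^2) := (Real.sqrt_sq (norm_nonneg _)).symm
    _ ≤ Real.sqrt (‖A 0 j‖^2 + ‖A 1 j‖^2) := by
        apply Real.sqrt_le_sqrt
        obtain rfl | rfl : i = 0 ∨ i = 1 := by omega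
        · nlinarith [sq_nonneg ‖A 1 j‖]
        · nlinarith [sq_nonneg ‖A 0 j‖]
    _ ≤ opNorm2 A := h2

lemma toEuclideanCLM_smul (c : ℂ) (A : Matrix (Fin 2) (Fin 2) ℂ) :
    Matrix.toEuclideanCLM (𝕜 := ℂ) (c • A) = c • Matrix.toEuclideanCLM (𝕜 := ℂ) A := by
  ext x
  obtain ⟨w, rfl⟩ : ∃ w : Fin 2 → ℂ, (WithLp.equiv 2 (Fin 2 → ℂ)).symm w = x :=
    ⟨WithLp.equiv 2 _ x, by simp⟩
  rw [Matrix.toEuclideanCLM_piLp_equiv_symm]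
  rw [ContinuousLinearMap.smul_apply, Matrix.toEuclideanCLM_piLp_equiv_symm]
  rw [map_smul]
  rfl

lemma opNorm2_smul (c : ℂ) (A : Matrix (Fin 2) (Fin 2) ℂ) :
    opNorm2 (c • A) = ‖c‖ * opNorm2 A := by
  unfold opNorm2
  rw [toEuclideanCLM_smul]
  exact norm_smul c (Matrix.toEuclideanCLM (𝕜 := ℂ) A)

lemma UT_norm_le (x y z : ℂ) (hx : ‖x‖ ≤ 1) (hz : ‖z‖ ≤ 1)
    (hy : ‖y‖^2 ≤ (1 - ‖x‖^2) * (1 - ‖z‖^2)) : opNorm2 !![x, y; 0, z] ≤ 1 := by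
  rw [opNorm2_le_one_iff]
  intro v
  have h0 : Matrix.mulVec !![x, y; 0, z] v 0 = x * v 0 + y * v 1 := by
    simp [Matrix.mulVec, dotProduct, Fin.sum_univ_two]
  have h1 : Matrix.mulVec !![x, y; 0, z] v 1 = z * v 1 := by
    simp [Matrix.mulVec, dotProduct, Fin.sum_univ_two]
  rw [h0, h1]
  have key := key_ineq_s4 (norm_nonneg x) hx (norm_nonneg z) hz (norm_nonneg y)
    (norm_nonneg (v 0)) (norm_nonneg (v 1)) hy
  have hb : ‖x * v 0 + y * v 1‖ ≤ ‖x‖ * ‖v 0‖ + ‖y‖ * ‖v 1‖ := by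
    calc ‖x * v 0 + y * v 1‖ ≤ ‖x * v 0‖ + ‖y * v 1‖ := norm_add_le _ _
      _ = ‖x‖ * ‖v 0‖ + ‖y‖ * ‖v 1‖ := by rw [norm_mul, norm_mul]
  have hb2 : ‖x * v 0 + y * v 1‖^2 ≤ (‖x‖ * ‖v 0‖ + ‖y‖ * ‖v 1‖)^2 :=
    pow_le_pow_left₀ (norm_nonneg _) hb 2
  have hz2 : ‖z * v 1‖^2 = ‖z‖^2 * ‖v 1‖^2 := by rw [norm_mul]; ring
  nlinarith [key]

lemma UT_y_bound (X : Matrix (Fin 2) (Fin 2) ℂ) (h10 : X 1 0 = 0) (h : opNorm2 X ≤ 1) :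
    ‖X 0 1‖^2 ≤ (1 - ‖X 0 0‖^2) * (1 - ‖X 1 1‖^2) := by
  set x := X 0 0 with hxdef
  set y := X 0 1 with hydef
  set z := X 1 1 with hzdef
  have hp : ‖x‖ ≤ 1 := le_trans (entry_le_opNorm2 X 0 0) h
  have hr : ‖z‖ ≤ 1 := le_trans (entry_le_opNorm2 X 1 1) h
  have hv : ∀ v : Fin 2 → ℂ, ‖x * v 0 + y * v 1‖^2 + ‖z * v 1‖^2 ≤ ‖v 0‖^2 + ‖v 1‖^2 := by
    intro v
    have := (opNorm2_le_one_iff X).mp h v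
    have e0 : X.mulVec v 0 = x * v 0 + y * v 1 := by
      simp [Matrix.mulVec, dotProduct, Fin.sum_univ_two, hxdef, hydef]
    have e1 : X.mulVec v 1 = z * v 1 := by
      simp [Matrix.mulVec, dotProduct, Fin.sum_univ_two, h10, hzdef]
    rwa [e0, e1] at this
  rcases eq_or_ne y 0 with hy0 | hy0
  · rw [hy0]
    simp only [norm_zero]
    have hx2 : ‖x‖^2 ≤ 1 := by nlinarith [norm_nonneg x]
    have hz2 : ‖z‖^2 ≤ 1 := by nlinarith [norm_nonneg z]
    nlinarith [mul_nonneg (sub_nonneg.mpr hx2) (sub_nonneg.mpr hz2)]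
  rcases eq_or_ne x 0 with hx0 | hx0
  · have := hv ![0, 1]
    simp only [Matrix.cons_val_zero, Matrix.cons_val_one, Matrix.head_cons, mul_zero, mul_one,
      zero_add, norm_zero, norm_one] at this
    rw [hx0]
    simp only [norm_zero]
    nlinarith [this]
  -- main case
  have hppos : 0 < ‖x‖ := norm_pos_iff.mpr hx0
  have hQpos : 0 < ‖y‖ := norm_pos_iff.mpr hy0
  have hc : ∀ c : ℝ, 0 ≤ c → (c * ‖x‖ + ‖y‖)^2 + ‖z‖^2 ≤ c^2 + 1 := by
    intro c hcnn
    have hkey := hv ![(c : ℂ) * (starRingEnd ℂ) x * y, ((‖x‖ * ‖y‖ : ℝ) : ℂ)]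
    simp only [Matrix.cons_val_zero, Matrix.cons_val_one, Matrix.head_cons] at hkey
    have hcc : (starRingEnd ℂ) x * x = ((‖x‖^2 : ℝ) : ℂ) := by
      rw [mul_comm, Complex.mul_conj']
      norm_cast
    have e0 : x * ((c : ℂ) * (starRingEnd ℂ) x * y) + y * ((‖x‖ * ‖y‖ : ℝ) : ℂ)
        = (((c * ‖x‖^2 + ‖x‖ * ‖y‖ : ℝ)) : ℂ) * y := by
      push_cast at hcc ⊢
      linear_combination (c : ℂ) * y * hcc
    rw [e0] at hkey
    have ht : (0:ℝ) ≤ c * ‖x‖^2 + ‖x‖ * ‖y‖ := by positivity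
    have n1 : ‖(((c * ‖x‖^2 + ‖x‖ * ‖y‖ : ℝ)) : ℂ) * y‖ = (c * ‖x‖^2 + ‖x‖ * ‖y‖) * ‖y‖ := by
      rw [norm_mul, Complex.norm_real, Real.norm_of_nonneg ht]
    have n2 : ‖z * ((‖x‖ * ‖y‖ : ℝ) : ℂ)‖ = ‖z‖ * (‖x‖ * ‖y‖) := by
      rw [norm_mul, Complex.norm_real, Real.norm_of_nonneg (by positivity)]
    have n3 : ‖(c : ℂ) * (starRingEnd ℂ) x * y‖ = c * (‖x‖ * ‖y‖) := by
      rw [norm_mul, norm_mul, Complex.norm_real, RCLike.norm_conj, Real.norm_of_nonneg hcnn]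
      ring
    have n4 : ‖((‖x‖ * ‖y‖ : ℝ) : ℂ)‖ = ‖x‖ * ‖y‖ := by
      rw [Complex.norm_real, Real.norm_of_nonneg (by positivity)]
    rw [n1, n2, n3, n4] at hkey
    nlinarith [hkey, mul_pos hppos hQpos, sq_nonneg (‖x‖ * ‖y‖), mul_pos (mul_pos hppos hQpos) (mul_pos hppos hQpos)]
  rcases lt_or_eq_of_le hp with hp1 | hp1
  · set d := 1 - ‖x‖^2 with hddef
    have h1 : 0 < d := by nlinarith
    set c0 := ‖x‖ * ‖y‖ / d with hc0def
    have hc0nn : 0 ≤ c0 := by positivity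
    have hcc := hc c0 hc0nn
    have hc0d : c0 * d = ‖x‖ * ‖y‖ := by
      rw [hc0def, div_mul_cancel₀ _ (ne_of_gt h1)]
    have e1 : (c0 * ‖x‖ + ‖y‖) * d = ‖y‖ := by
      have : d = 1 - ‖x‖^2 := hddef
      nlinarith [hc0d]
    have h2 := mul_le_mul_of_nonneg_right hcc (le_of_lt (mul_pos h1 h1))
    nlinarith [h2, e1, hc0d, h1, sq_nonneg ‖y‖, sq_nonneg ‖z‖, sq_nonneg (‖z‖ * d)]
  · exfalso
    have hcQ := hc (1/‖y‖) (by positivity)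
    rw [hp1] at hcQ
    have hQQ : (1/‖y‖)*‖y‖ = 1 := one_div_mul_cancel (ne_of_gt hQpos)
    nlinarith [hcQ, hQQ, hQpos, sq_nonneg ‖z‖, mul_pos hQpos hQpos]

def sFun (z₁ z₂ : ℂ) : ℝ := Real.sqrt ((1 - ‖z₁‖ ^ 2) * (1 - ‖z₂‖ ^ 2))

def Dfun (q : ℂ × ℂ × ℂ × ℂ) (X : Matrix (Fin 2) (Fin 2) ℂ) : ℂ :=
  hexDen q.2 (X 0 0) (X 1 1) - q.1 * X 0 1

def Sset (q : ℂ × ℂ × ℂ × ℂ) : Set ENNReal :=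
  {r | ∃ X : Matrix (Fin 2) (Fin 2) ℂ, X 1 0 = 0 ∧ Dfun q X = 0 ∧
    r = ENNReal.ofReal (opNorm2 X)}

def Cond (q : ℂ × ℂ × ℂ × ℂ) : Prop :=
  ∀ z₁ z₂ : ℂ, ‖z₁‖ ≤ 1 → ‖z₂‖ ≤ 1 → ‖q.1‖ * sFun z₁ z₂ < ‖hexDen q.2 z₁ z₂‖

lemma sFun_nonneg (z₁ z₂ : ℂ) : 0 ≤ sFun z₁ z₂ := Real.sqrt_nonneg _

lemma sFun_sq {z₁ z₂ : ℂ} (h1 : ‖z₁‖ ≤ 1) (h2 : ‖z₂‖ ≤ 1) :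
    sFun z₁ z₂ ^ 2 = (1 - ‖z₁‖ ^ 2) * (1 - ‖z₂‖ ^ 2) := by
  apply Real.sq_sqrt
  have h1' : (0:ℝ) ≤ 1 - ‖z₁‖^2 := by nlinarith [norm_nonneg z₁]
  have h2' : (0:ℝ) ≤ 1 - ‖z₂‖^2 := by nlinarith [norm_nonneg z₂]
  exact mul_nonneg h1' h2'

lemma sFun_le_one {z₁ z₂ : ℂ} (h1 : ‖z₁‖ ≤ 1) (h2 : ‖z₂‖ ≤ 1) : sFun z₁ z₂ ≤ 1 := by
  rw [show (1:ℝ) = Real.sqrt 1 by simp [Real.sqrt_one]]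
  apply Real.sqrt_le_sqrt
  have h1' : (0:ℝ) ≤ 1 - ‖z₁‖^2 := by nlinarith [norm_nonneg z₁]
  have h2' : (0:ℝ) ≤ 1 - ‖z₂‖^2 := by nlinarith [norm_nonneg z₂]
  nlinarith [mul_nonneg h1' h2']

lemma cond_min (q : ℂ × ℂ × ℂ × ℂ) (hC : Cond q) : ∃ m > 0, ∀ z₁ z₂ : ℂ,
    ‖z₁‖ ≤ 1 → ‖z₂‖ ≤ 1 → ‖q.1‖ * sFun z₁ z₂ + m ≤ ‖hexDen q.2 z₁ z₂‖ := by
  set K : Set (ℂ × ℂ) := (Metric.closedBall (0:ℂ) 1) ×ˢ (Metric.closedBall (0:ℂ) 1) with hKdef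
  have hK : IsCompact K := (isCompact_closedBall _ _).prod (isCompact_closedBall _ _)
  have hne : K.Nonempty := ⟨(0, 0), by simp [hKdef]⟩
  have hcont : Continuous (fun p : ℂ × ℂ => ‖hexDen q.2 p.1 p.2‖ - ‖q.1‖ * sFun p.1 p.2) := by
    apply Continuous.sub
    · apply Continuous.norm
      unfold hexDen
      fun_prop
    · apply Continuous.mul continuous_const
      unfold sFun
      apply Real.continuous_sqrt.comp
      fun_prop
  obtain ⟨p₀, hp₀K, hmin⟩ := hK.exists_isMinOn hne hcont.continuousOn
  have hmem : ∀ p : ℂ × ℂ, p ∈ K ↔ (‖p.1‖ ≤ 1 ∧ ‖p.2‖ ≤ 1) := by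
    intro p
    simp [hKdef, Set.mem_prod, mem_closedBall_zero_iff]
  refine ⟨‖hexDen q.2 p₀.1 p₀.2‖ - ‖q.1‖ * sFun p₀.1 p₀.2, ?_, ?_⟩
  · have := (hmem p₀).mp hp₀K
    have := hC p₀.1 p₀.2 this.1 this.2
    linarith
  · intro z₁ z₂ h1 h2
    have := hmin ((hmem (z₁, z₂)).mpr ⟨h1, h2⟩)
    simp only [Set.mem_setOf_eq] at this
    linarith [this]

lemma tetra_min (x : ℂ × ℂ × ℂ) (hx : x ∈ tetrablock) : ∃ m > 0, ∀ z₁ z₂ : ℂ,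
    ‖z₁‖ ≤ 1 → ‖z₂‖ ≤ 1 → m ≤ ‖hexDen x z₁ z₂‖ := by
  have hC : Cond ((0:ℂ), x) := by
    intro z₁ z₂ h1 h2
    simpa using norm_pos_iff.mpr (hx z₁ z₂ h1 h2)
  obtain ⟨m, hm, hb⟩ := cond_min ((0:ℂ), x) hC
  refine ⟨m, hm, fun z₁ z₂ h1 h2 => ?_⟩
  have := hb z₁ z₂ h1 h2
  simpa using this

lemma Kstar_eq (x : ℂ × ℂ × ℂ) : Kstar x =
    sSup {r : ℝ | ∃ z₁ z₂ : ℂ, ‖z₁‖ < 1 ∧ ‖z₂‖ < 1 ∧ r = sFun z₁ z₂ / ‖hexDen x z₁ z₂‖} := rfl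

lemma stepA (q : ℂ × ℂ × ℂ × ℂ) :
    Cond q ↔ (q.2 ∈ tetrablock ∧ ‖q.1‖ * Kstar q.2 < 1) := by
  constructor
  · intro hC
    have htet : q.2 ∈ tetrablock := by
      intro z₁ z₂ h1 h2 h0
      have := hC z₁ z₂ h1 h2
      rw [h0, norm_zero] at this
      nlinarith [mul_nonneg (norm_nonneg q.1) (sFun_nonneg z₁ z₂)]
    refine ⟨htet, ?_⟩
    rcases eq_or_ne q.1 0 with ha | ha
    · rw [ha, norm_zero, zero_mul]
      exact one_pos
    · have hapos : 0 < ‖q.1‖ := norm_pos_iff.mpr ha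
      obtain ⟨m, hm, hb⟩ := cond_min q hC
      have hKb : Kstar q.2 ≤ 1 / (‖q.1‖ + m) := by
        rw [Kstar_eq]
        apply Real.sSup_le ?_ (by positivity)
        rintro r ⟨z₁, z₂, h1, h2, rfl⟩
        have hH := hb z₁ z₂ h1.le h2.le
        have hHpos : 0 < ‖hexDen q.2 z₁ z₂‖ := by
          nlinarith [mul_nonneg (norm_nonneg q.1) (sFun_nonneg z₁ z₂)]
        rw [div_le_div_iff₀ hHpos (by positivity)]
        have hs1 := sFun_le_one h1.le h2.le
        have hs0 := sFun_nonneg z₁ z₂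
        nlinarith [mul_le_of_le_one_right (norm_nonneg q.1) hs1]
      calc ‖q.1‖ * Kstar q.2 ≤ ‖q.1‖ * (1 / (‖q.1‖ + m)) :=
            mul_le_mul_of_nonneg_left hKb (norm_nonneg _)
        _ = ‖q.1‖ / (‖q.1‖ + m) := by ring
        _ < 1 := by
            rw [div_lt_one (by positivity)]
            linarith
  · rintro ⟨htet, hK⟩ z₁ z₂ h1 h2
    have hHpos : 0 < ‖hexDen q.2 z₁ z₂‖ := norm_pos_iff.mpr (htet z₁ z₂ h1 h2)
    rcases eq_or_lt_of_le (sFun_nonneg z₁ z₂) with hs | hs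
    · rw [← hs, mul_zero]
      exact hHpos
    · have hprod : 0 < (1 - ‖z₁‖ ^ 2) * (1 - ‖z₂‖ ^ 2) := Real.sqrt_pos.mp hs
      obtain ⟨hf1, hf2⟩ : 0 < 1 - ‖z₁‖^2 ∧ 0 < 1 - ‖z₂‖^2 := by
        rcases mul_pos_iff.mp hprod with ⟨ha', hb'⟩ | ⟨ha', hb'⟩
        · exact ⟨ha', hb'⟩
        · exfalso; nlinarith [norm_nonneg z₂]
      have hz1 : ‖z₁‖ < 1 := by nlinarith [norm_nonneg z₁]
      have hz2 : ‖z₂‖ < 1 := by nlinarith [norm_nonneg z₂]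
      obtain ⟨m, hm, hbm⟩ := tetra_min q.2 htet
      have hbdd : BddAbove {r : ℝ | ∃ z₁ z₂ : ℂ, ‖z₁‖ < 1 ∧ ‖z₂‖ < 1 ∧
          r = sFun z₁ z₂ / ‖hexDen q.2 z₁ z₂‖} := by
        refine ⟨1 / m, ?_⟩
        rintro r ⟨w₁, w₂, hw1, hw2, rfl⟩
        have hHm := hbm w₁ w₂ hw1.le hw2.le
        exact div_le_div₀ zero_le_one (sFun_le_one hw1.le hw2.le) hm hHm
      have hel : sFun z₁ z₂ / ‖hexDen q.2 z₁ z₂‖ ≤ Kstar q.2 := by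
        rw [Kstar_eq]
        exact le_csSup hbdd ⟨z₁, z₂, hz1, hz2, rfl⟩
      have h3 : ‖q.1‖ * (sFun z₁ z₂ / ‖hexDen q.2 z₁ z₂‖) < 1 :=
        lt_of_le_of_lt (mul_le_mul_of_nonneg_left hel (norm_nonneg _)) hK
      rw [mul_div_assoc'] at h3
      rw [div_lt_one hHpos] at h3
      exact h3

lemma inner_bound (q : ℂ × ℂ × ℂ × ℂ) (m : ℝ)
    (hb : ∀ z₁ z₂ : ℂ, ‖z₁‖ ≤ 1 → ‖z₂‖ ≤ 1 → ‖q.1‖ * sFun z₁ z₂ + m ≤ ‖hexDen q.2 z₁ z₂‖)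
    (W : Matrix (Fin 2) (Fin 2) ℂ) (h10 : W 1 0 = 0) (hn : opNorm2 W ≤ 1) :
    m ≤ ‖Dfun q W‖ := by
  have hx : ‖W 0 0‖ ≤ 1 := le_trans (entry_le_opNorm2 W 0 0) hn
  have hz : ‖W 1 1‖ ≤ 1 := le_trans (entry_le_opNorm2 W 1 1) hn
  have hy2 := UT_y_bound W h10 hn
  have hy : ‖W 0 1‖ ≤ sFun (W 0 0) (W 1 1) := by
    have : ‖W 0 1‖ = Real.sqrt (‖W 0 1‖^2) := (Real.sqrt_sq (norm_nonneg _)).symm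
    rw [this]
    exact Real.sqrt_le_sqrt hy2
  have hH := hb (W 0 0) (W 1 1) hx hz
  have htri : ‖hexDen q.2 (W 0 0) (W 1 1)‖ - ‖q.1 * W 0 1‖ ≤ ‖Dfun q W‖ := by
    unfold Dfun
    exact le_trans (by linarith [norm_sub_norm_le (hexDen q.2 (W 0 0) (W 1 1)) (q.1 * W 0 1)]) le_rfl
  rw [norm_mul] at htri
  nlinarith [mul_le_mul_of_nonneg_left hy (norm_nonneg q.1)]

lemma stepB (q : ℂ × ℂ × ℂ × ℂ) : 1 < sInf (Sset q) ↔ Cond q := by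
  constructor
  · intro h z₁ z₂ h1 h2
    by_contra hle
    push_neg at hle
    obtain ⟨y, hy, hyeq⟩ : ∃ y : ℂ, ‖y‖^2 ≤ (1 - ‖z₁‖^2) * (1 - ‖z₂‖^2) ∧
        hexDen q.2 z₁ z₂ - q.1 * y = 0 := by
      rcases eq_or_ne q.1 0 with ha | ha
      · have h0 : ‖hexDen q.2 z₁ z₂‖ ≤ 0 := by
          rw [ha, norm_zero, zero_mul] at hle
          exact hle
        have h0' : hexDen q.2 z₁ z₂ = 0 := norm_le_zero_iff.mp h0
        refine ⟨0, ?_, by rw [h0', mul_zero, sub_zero]⟩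
        have h1' : (0:ℝ) ≤ 1 - ‖z₁‖^2 := by nlinarith [norm_nonneg z₁]
        have h2' : (0:ℝ) ≤ 1 - ‖z₂‖^2 := by nlinarith [norm_nonneg z₂]
        simpa using mul_nonneg h1' h2'
      · have hapos : 0 < ‖q.1‖ := norm_pos_iff.mpr ha
        refine ⟨hexDen q.2 z₁ z₂ / q.1, ?_, by field_simp; ring⟩
        rw [norm_div]
        have hd : ‖hexDen q.2 z₁ z₂‖ / ‖q.1‖ ≤ sFun z₁ z₂ := by
          rw [div_le_iff₀ hapos]
          linarith [hle, mul_comm ‖q.1‖ (sFun z₁ z₂)]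
        calc (‖hexDen q.2 z₁ z₂‖ / ‖q.1‖)^2 ≤ (sFun z₁ z₂)^2 :=
              pow_le_pow_left₀ (by positivity) hd 2
          _ = (1 - ‖z₁‖^2) * (1 - ‖z₂‖^2) := sFun_sq h1 h2
    set X := !![z₁, y; 0, z₂] with hXdef
    have hX10 : X 1 0 = 0 := by simp [hXdef]
    have hX00 : X 0 0 = z₁ := by simp [hXdef]
    have hX01 : X 0 1 = y := by simp [hXdef]
    have hX11 : X 1 1 = z₂ := by simp [hXdef]
    have hXnorm : opNorm2 X ≤ 1 := UT_norm_le z₁ y z₂ h1 h2 hy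
    have hmemS : ENNReal.ofReal (opNorm2 X) ∈ Sset q := by
      refine ⟨X, hX10, ?_, rfl⟩
      unfold Dfun
      rw [hX00, hX01, hX11]
      exact hyeq
    have hle1 : sInf (Sset q) ≤ 1 := by
      refine le_trans (sInf_le hmemS) ?_
      rw [ENNReal.ofReal_le_one]
      exact hXnorm
    exact absurd h (not_lt.mpr hle1)
  · intro hC
    obtain ⟨m, hm, hb⟩ := cond_min q hC
    set L : ℝ := 2*(‖q.2.1‖ + ‖q.1‖ + ‖q.2.2.1‖) + 12*‖q.2.2.2‖ + 1 with hLdef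
    have hL : 0 < L := by positivity
    set δ : ℝ := min 1 (m / L) with hδdef
    have hδ : 0 < δ := lt_min one_pos (div_pos hm hL)
    have hδ1 : δ ≤ 1 := min_le_left _ _
    have hδ2 : δ ≤ m / L := min_le_right _ _
    have key : ∀ X : Matrix (Fin 2) (Fin 2) ℂ, X 1 0 = 0 → Dfun q X = 0 →
        1 + δ ≤ opNorm2 X := by
      intro X h10 hD
      by_contra hlt
      push_neg at hlt
      set t := opNorm2 X with htdef
      rcases le_or_gt t 1 with ht1 | ht1
      · have := inner_bound q m hb X h10 ht1
        rw [hD, norm_zero] at this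
        linarith
      · -- 1 < t < 1 + δ ≤ 2
        have htpos : 0 < t := lt_trans one_pos ht1
        have ht2 : t ≤ 2 := by linarith
        set c : ℂ := ((t:ℝ) : ℂ)⁻¹ with hcdef
        set X' := c • X with hX'def
        have hX'10 : X' 1 0 = 0 := by simp [hX'def, h10]
        have hcnorm : ‖c‖ = t⁻¹ := by
          rw [hcdef, norm_inv, Complex.norm_real, Real.norm_of_nonneg htpos.le]
        have hX'norm : opNorm2 X' ≤ 1 := by
          rw [hX'def, opNorm2_smul, hcnorm, ← htdef, inv_mul_cancel₀ (ne_of_gt htpos)]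
        have hinner := inner_bound q m hb X' hX'10 hX'norm
        -- now bound ‖Dfun q X'‖ above by L * (t - 1)
        have hX'00 : X' 0 0 = c * X 0 0 := by simp [hX'def]
        have hX'01 : X' 0 1 = c * X 0 1 := by simp [hX'def]
        have hX'11 : X' 1 1 = c * X 1 1 := by simp [hX'def]
        have hD' : Dfun q X' = q.2.2.2 * ((c^2 - 1) * (X 0 0 * X 1 1))
            - q.2.1 * ((c - 1) * X 0 0) - q.2.2.1 * ((c - 1) * X 1 1)
            - q.1 * ((c - 1) * X 0 1) := by
          unfold Dfun hexDen at hD ⊢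
          rw [hX'00, hX'01, hX'11]
          linear_combination hD
        have hc1 : ‖c - 1‖ = 1 - t⁻¹ := by
          rw [hcdef]
          rw [show (((t:ℝ):ℂ)⁻¹ - 1) = (((t⁻¹ - 1 : ℝ)) : ℂ) by push_cast; ring]
          rw [Complex.norm_real, Real.norm_of_nonpos (by
            have : t⁻¹ ≤ 1 := by rw [inv_le_one_iff₀]; right; linarith
            linarith)]
          ring
        have hc2 : ‖c^2 - 1‖ = 1 - (t⁻¹)^2 := by
          rw [hcdef]
          rw [show ((((t:ℝ):ℂ)⁻¹)^2 - 1) = ((((t⁻¹)^2 - 1 : ℝ)) : ℂ) by push_cast; ring]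
          rw [Complex.norm_real, Real.norm_of_nonpos (by
            have h1t : t⁻¹ ≤ 1 := by rw [inv_le_one_iff₀]; right; linarith
            have h0t : 0 ≤ t⁻¹ := by positivity
            nlinarith)]
          ring
        have hxle : ‖X 0 0‖ ≤ t := entry_le_opNorm2 X 0 0
        have hyle : ‖X 0 1‖ ≤ t := entry_le_opNorm2 X 0 1
        have hzle : ‖X 1 1‖ ≤ t := entry_le_opNorm2 X 1 1
        have hinv1 : (1 - t⁻¹) * t = t - 1 := by field_simp
        have hinv2 : (1 - (t⁻¹)^2) * t^2 = t^2 - 1 := by field_simp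
        have hb1 : ‖(c - 1) * X 0 0‖ ≤ t - 1 := by
          rw [norm_mul, hc1]
          calc (1 - t⁻¹) * ‖X 0 0‖ ≤ (1 - t⁻¹) * t := by
                apply mul_le_mul_of_nonneg_left hxle
                have : t⁻¹ ≤ 1 := by rw [inv_le_one_iff₀]; right; linarith
                linarith
            _ = t - 1 := hinv1
        have hb2 : ‖(c - 1) * X 1 1‖ ≤ t - 1 := by
          rw [norm_mul, hc1]
          calc (1 - t⁻¹) * ‖X 1 1‖ ≤ (1 - t⁻¹) * t := by
                apply mul_le_mul_of_nonneg_left hzle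
                have : t⁻¹ ≤ 1 := by rw [inv_le_one_iff₀]; right; linarith
                linarith
            _ = t - 1 := hinv1
        have hb3 : ‖(c - 1) * X 0 1‖ ≤ t - 1 := by
          rw [norm_mul, hc1]
          calc (1 - t⁻¹) * ‖X 0 1‖ ≤ (1 - t⁻¹) * t := by
                apply mul_le_mul_of_nonneg_left hyle
                have : t⁻¹ ≤ 1 := by rw [inv_le_one_iff₀]; right; linarith
                linarith
            _ = t - 1 := hinv1
        have hb4 : ‖(c^2 - 1) * (X 0 0 * X 1 1)‖ ≤ 3 * (t - 1) := by
          rw [norm_mul, hc2, norm_mul]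
          have hxz : ‖X 0 0‖ * ‖X 1 1‖ ≤ t^2 := by nlinarith [norm_nonneg (X 0 0), norm_nonneg (X 1 1)]
          have hnn : (0:ℝ) ≤ 1 - (t⁻¹)^2 := by
            have h1t : t⁻¹ ≤ 1 := by rw [inv_le_one_iff₀]; right; linarith
            have h0t : 0 ≤ t⁻¹ := by positivity
            nlinarith
          calc (1 - (t⁻¹)^2) * (‖X 0 0‖ * ‖X 1 1‖) ≤ (1 - (t⁻¹)^2) * t^2 :=
                mul_le_mul_of_nonneg_left hxz hnn
            _ = t^2 - 1 := hinv2
            _ = (t-1)*(t+1) := by ring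
            _ ≤ 3 * (t - 1) := by nlinarith
        have hDb : ‖Dfun q X'‖ ≤ L * (t - 1) := by
          rw [hD']
          calc ‖q.2.2.2 * ((c^2 - 1) * (X 0 0 * X 1 1)) - q.2.1 * ((c - 1) * X 0 0)
              - q.2.2.1 * ((c - 1) * X 1 1) - q.1 * ((c - 1) * X 0 1)‖
              ≤ ‖q.2.2.2 * ((c^2 - 1) * (X 0 0 * X 1 1)) - q.2.1 * ((c - 1) * X 0 0)
              - q.2.2.1 * ((c - 1) * X 1 1)‖ + ‖q.1 * ((c - 1) * X 0 1)‖ := norm_sub_le _ _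
            _ ≤ ‖q.2.2.2 * ((c^2 - 1) * (X 0 0 * X 1 1)) - q.2.1 * ((c - 1) * X 0 0)‖
                + ‖q.2.2.1 * ((c - 1) * X 1 1)‖ + ‖q.1 * ((c - 1) * X 0 1)‖ := by
                linarith [norm_sub_le (q.2.2.2 * ((c^2 - 1) * (X 0 0 * X 1 1)) - q.2.1 * ((c - 1) * X 0 0)) (q.2.2.1 * ((c - 1) * X 1 1))]
            _ ≤ ‖q.2.2.2 * ((c^2 - 1) * (X 0 0 * X 1 1))‖ + ‖q.2.1 * ((c - 1) * X 0 0)‖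
                + ‖q.2.2.1 * ((c - 1) * X 1 1)‖ + ‖q.1 * ((c - 1) * X 0 1)‖ := by
                linarith [norm_sub_le (q.2.2.2 * ((c^2 - 1) * (X 0 0 * X 1 1))) (q.2.1 * ((c - 1) * X 0 0))]
            _ ≤ L * (t - 1) := by
                simp only [norm_mul, hc1, hc2]
                rw [norm_mul, hc1] at hb1 hb2 hb3
                rw [norm_mul, hc2, norm_mul] at hb4
                have e1 := mul_le_mul_of_nonneg_left hb4 (norm_nonneg q.2.2.2)
                have e2 := mul_le_mul_of_nonneg_left hb1 (norm_nonneg q.2.1)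
                have e3 := mul_le_mul_of_nonneg_left hb2 (norm_nonneg q.2.2.1)
                have e4 := mul_le_mul_of_nonneg_left hb3 (norm_nonneg q.1)
                have ht0 : (0:ℝ) ≤ t - 1 := by linarith
                have hsum : ‖q.2.2.2‖*(3*(t-1)) + ‖q.2.1‖*(t-1) + ‖q.2.2.1‖*(t-1)
                    + ‖q.1‖*(t-1) ≤ L*(t-1) := by
                  rw [hLdef]
                  nlinarith [mul_nonneg (norm_nonneg q.2.2.2) ht0,
                    mul_nonneg (norm_nonneg q.2.1) ht0,
                    mul_nonneg (norm_nonneg q.2.2.1) ht0,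
                    mul_nonneg (norm_nonneg q.1) ht0]
                have hadd := add_le_add (add_le_add (add_le_add e1 e2) e3) e4
                exact le_trans hadd hsum
        -- m ≤ L (t-1) < L δ ≤ m, contradiction
        have : m ≤ L * (t - 1) := le_trans hinner hDb
        have hlt' : L * (t - 1) < L * δ := by
          apply mul_lt_mul_of_pos_left _ hL
          linarith
        have : m < L * δ := lt_of_le_of_lt this hlt'
        have : L * δ ≤ m := by
          calc L * δ ≤ L * (m / L) := mul_le_mul_of_nonneg_left hδ2 hL.le
            _ = m := by field_simp
        linarith
    refine lt_of_lt_of_le (b := ENNReal.ofReal (1 + δ)) ?_ (le_sInf ?_)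
    · exact (ENNReal.one_lt_ofReal).mpr (by linarith)
    · rintro r ⟨X, h10, hD, rfl⟩
      exact ENNReal.ofReal_le_ofReal (key X h10 hD)

lemma detD (A X : Matrix (Fin 2) (Fin 2) ℂ) (h10 : X 1 0 = 0) :
    (1 - A * X).det = Dfun (piMap A) X := by
  simp [Matrix.det_fin_two, Matrix.mul_apply, Matrix.sub_apply, Matrix.one_apply,
    Fin.sum_univ_two, h10, Dfun, hexDen, piMap]
  ring

lemma muHexa_lt_one_iff (A : Matrix (Fin 2) (Fin 2) ℂ) :
    muHexa A < 1 ↔ 1 < sInf (Sset (piMap A)) := by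
  unfold muHexa
  rw [ENNReal.inv_lt_one]
  have hset : {r : ENNReal | ∃ X : Matrix (Fin 2) (Fin 2) ℂ,
      X 1 0 = 0 ∧ (1 - A * X).det = 0 ∧ r = ENNReal.ofReal (opNorm2 X)} = Sset (piMap A) := by
    ext r
    constructor
    · rintro ⟨X, h10, hD, rfl⟩
      exact ⟨X, h10, by rwa [detD A X h10] at hD, rfl⟩
    · rintro ⟨X, h10, hD, rfl⟩
      exact ⟨X, h10, by rwa [detD A X h10], rfl⟩
  rw [hset]

lemma exists_A (q : ℂ × ℂ × ℂ × ℂ) (h : q.1 = 0 → q.2.1 * q.2.2.1 = q.2.2.2) :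
    ∃ A : Matrix (Fin 2) (Fin 2) ℂ, piMap A = q := by
  obtain ⟨a, x₁, x₂, x₃⟩ := q
  simp only at h
  rcases eq_or_ne a 0 with rfl | ha
  · refine ⟨!![x₁, 0; 0, x₂], ?_⟩
    unfold piMap
    have hdet : (!![x₁, 0; 0, x₂] : Matrix (Fin 2) (Fin 2) ℂ).det = x₃ := by
      rw [Matrix.det_fin_two]
      simp
      exact h rfl
    simp [hdet]
  · refine ⟨!![x₁, (x₁ * x₂ - x₃)/a; a, x₂], ?_⟩
    unfold piMap
    have hdet : (!![x₁, (x₁ * x₂ - x₃)/a; a, x₂] : Matrix (Fin 2) (Fin 2) ℂ).det = x₃ := by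
      rw [Matrix.det_fin_two]
      simp
      field_simp
      ring
    simp [hdet]

/-- Membership in `ℍ_μ`, and `ℍ_μ ∩ ({0} × 𝔼)`. -/
theorem stmt4 :
    (∀ q : ℂ × ℂ × ℂ × ℂ,
      q ∈ hexMu ↔
        (q.2 ∈ tetrablock ∧ ‖q.1‖ * Kstar q.2 < 1 ∧
          (q.1 = 0 → q.2.1 * q.2.2.1 = q.2.2.2))) ∧
    hexMu ∩ {q : ℂ × ℂ × ℂ × ℂ | q.1 = 0 ∧ q.2 ∈ tetrablock}
      = {q : ℂ × ℂ × ℂ × ℂ | q ∈ hexMu ∧ q.1 = 0 ∧ q.2.1 * q.2.2.1 = q.2.2.2} := by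
  have main : ∀ q : ℂ × ℂ × ℂ × ℂ, q ∈ hexMu ↔
      (q.2 ∈ tetrablock ∧ ‖q.1‖ * Kstar q.2 < 1 ∧
        (q.1 = 0 → q.2.1 * q.2.2.1 = q.2.2.2)) := by
    intro q
    constructor
    · rintro ⟨A, hmu, rfl⟩
      have h1 : 1 < sInf (Sset (piMap A)) := (muHexa_lt_one_iff A).mp hmu
      have hC := (stepB _).mp h1
      obtain ⟨ht, hK⟩ := (stepA _).mp hC
      refine ⟨ht, hK, ?_⟩
      intro h0
      show (piMap A).2.1 * (piMap A).2.2.1 = (piMap A).2.2.2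
      have h0' : A 1 0 = 0 := h0
      unfold piMap
      simp only [Matrix.det_fin_two]
      rw [h0']
      ring
    · rintro ⟨ht, hK, h0⟩
      obtain ⟨A, rfl⟩ := exists_A q h0
      exact ⟨A, (muHexa_lt_one_iff A).mpr ((stepB _).mpr ((stepA _).mpr ⟨ht, hK⟩)), rfl⟩
  refine ⟨main, ?_⟩
  ext q
  simp only [Set.mem_inter_iff, Set.mem_setOf_eq]
  constructor
  · rintro ⟨hmu, h0, _⟩
    exact ⟨hmu, h0, ((main q).mp hmu).2.2 h0⟩
  · rintro ⟨hmu, h0, _⟩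
    exact ⟨hmu, h0, ((main q).mp hmu).1⟩
end
end

section
/- ℍ_μ is not an open subset of ℂ⁴. More precisely: no point (0, x₁, x₂, x₁x₂) with (x₁, x₂, x₁x₂) ∈ 𝔼 is an interior point of ℍ_μ, and the interior of ℍ_μ in ℂ⁴ equals {(a, x₁, x₂, x₃) ∈ ℍ_μ : a ≠ 0} = ℍ_μ \ ({0} × 𝔼). -/
noncomputable section

open Complex

namespace Stmt5Aux

lemma det_formula (A X : Matrix (Fin 2) (Fin 2) ℂ) (h : X 1 0 = 0) :
    (1 - A * X).det = hexDen (A 0 0, A 1 1, A.det) (X 0 0) (X 1 1) - A 1 0 * X 0 1 := by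
  simp [Matrix.det_fin_two, Matrix.mul_apply, Fin.sum_univ_two, hexDen, h]
  ring

lemma clm_apply (A : Matrix (Fin 2) (Fin 2) ℂ) (x : EuclideanSpace ℂ (Fin 2)) (i : Fin 2) :
    (Matrix.toEuclideanCLM (𝕜 := ℂ) A x) i = Matrix.mulVec A (fun j => x j) i := rfl

lemma coord_le_norm (y : EuclideanSpace ℂ (Fin 2)) (i : Fin 2) : ‖y i‖ ≤ ‖y‖ := by
  rw [EuclideanSpace.norm_eq]
  calc ‖y i‖ = Real.sqrt (‖y i‖ ^ 2) := by rw [Real.sqrt_sq (norm_nonneg _)]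
  _ ≤ _ := by
      apply Real.sqrt_le_sqrt
      exact Finset.single_le_sum (fun j _ => sq_nonneg ‖y j‖) (Finset.mem_univ i)

lemma entry_le_opNorm2 (A : Matrix (Fin 2) (Fin 2) ℂ) (i j : Fin 2) : ‖A i j‖ ≤ opNorm2 A := by
  have h := (Matrix.toEuclideanCLM (𝕜 := ℂ) A).le_opNorm (EuclideanSpace.single j 1)
  rw [EuclideanSpace.norm_single, norm_one, mul_one] at h
  refine le_of_eq ?_ |>.trans ((coord_le_norm _ i).trans h)
  rw [clm_apply]
  simp [Matrix.mulVec, dotProduct, EuclideanSpace.single_apply]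

lemma diag_opNorm2_le {z₁ z₂ : ℂ} (h₁ : ‖z₁‖ ≤ 1) (h₂ : ‖z₂‖ ≤ 1) :
    opNorm2 !![z₁, 0; 0, z₂] ≤ 1 := by
  refine ContinuousLinearMap.opNorm_le_bound _ zero_le_one fun x => ?_
  rw [one_mul]
  rw [EuclideanSpace.norm_eq, EuclideanSpace.norm_eq]
  apply Real.sqrt_le_sqrt
  rw [Fin.sum_univ_two, Fin.sum_univ_two, clm_apply, clm_apply]
  have e0 : Matrix.mulVec !![z₁, 0; 0, z₂] (fun j => x j) 0 = z₁ * x 0 := by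
    simp [Matrix.mulVec, dotProduct, Fin.sum_univ_two]
  have e1 : Matrix.mulVec !![z₁, 0; 0, z₂] (fun j => x j) 1 = z₂ * x 1 := by
    simp [Matrix.mulVec, dotProduct, Fin.sum_univ_two]
  rw [e0, e1, norm_mul, norm_mul]
  have b0 : (‖z₁‖ * ‖x 0‖) ^ 2 ≤ ‖x 0‖ ^ 2 :=
    pow_le_pow_left₀ (mul_nonneg (norm_nonneg _) (norm_nonneg _))
      (mul_le_of_le_one_left (norm_nonneg _) h₁) 2
  have b1 : (‖z₂‖ * ‖x 1‖) ^ 2 ≤ ‖x 1‖ ^ 2 :=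
    pow_le_pow_left₀ (mul_nonneg (norm_nonneg _) (norm_nonneg _))
      (mul_le_of_le_one_left (norm_nonneg _) h₂) 2
  linarith

def CLMlin : Matrix (Fin 2) (Fin 2) ℂ →ₗ[ℂ]
    (EuclideanSpace ℂ (Fin 2) →L[ℂ] EuclideanSpace ℂ (Fin 2)) where
  toFun := fun X => Matrix.toEuclideanCLM (𝕜 := ℂ) X
  map_add' := fun _ _ => map_add _ _ _
  map_smul' := fun _ _ => map_smul _ _ _

lemma continuous_opNorm2 : Continuous opNorm2 :=
  continuous_norm.comp CLMlin.continuous_of_finiteDimensional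

lemma continuous_H : Continuous (fun p : (ℂ × ℂ × ℂ × ℂ) × Matrix (Fin 2) (Fin 2) ℂ =>
    hexDen p.1.2 (p.2 0 0) (p.2 1 1) - p.1.1 * p.2 0 1) := by
  have hent : ∀ i j : Fin 2,
      Continuous fun p : (ℂ × ℂ × ℂ × ℂ) × Matrix (Fin 2) (Fin 2) ℂ => p.2 i j :=
    fun i j => (continuous_apply j).comp ((continuous_apply i).comp continuous_snd)
  have c0 : Continuous fun p : (ℂ × ℂ × ℂ × ℂ) × Matrix (Fin 2) (Fin 2) ℂ => p.1.1 := by fun_prop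
  have c1 : Continuous fun p : (ℂ × ℂ × ℂ × ℂ) × Matrix (Fin 2) (Fin 2) ℂ => p.1.2.1 := by
    fun_prop
  have c2 : Continuous fun p : (ℂ × ℂ × ℂ × ℂ) × Matrix (Fin 2) (Fin 2) ℂ => p.1.2.2.1 := by
    fun_prop
  have c3 : Continuous fun p : (ℂ × ℂ × ℂ × ℂ) × Matrix (Fin 2) (Fin 2) ℂ => p.1.2.2.2 := by
    fun_prop
  unfold hexDen
  exact (((continuous_const.sub (c1.mul (hent 0 0))).sub (c2.mul (hent 1 1))).add
    ((c3.mul (hent 0 0)).mul (hent 1 1))).sub (c0.mul (hent 0 1))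

/-- The set `S(q)` of norms of admissible matrices, depending only on `q = π(A)`. -/
def Sset (q : ℂ × ℂ × ℂ × ℂ) : Set ENNReal :=
  {r | ∃ X : Matrix (Fin 2) (Fin 2) ℂ, X 1 0 = 0 ∧
    hexDen q.2 (X 0 0) (X 1 1) - q.1 * X 0 1 = 0 ∧ r = ENNReal.ofReal (opNorm2 X)}

lemma muHexa_eq (A : Matrix (Fin 2) (Fin 2) ℂ) : muHexa A = (sInf (Sset (piMap A)))⁻¹ := by
  unfold muHexa Sset piMap
  congr 2
  ext r
  simp only [Set.mem_setOf_eq]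
  refine exists_congr fun X => and_congr_right fun hX => and_congr_left' ?_
  rw [det_formula A X hX]

lemma one_lt_sInf_of_mem {q : ℂ × ℂ × ℂ × ℂ} (h : q ∈ hexMu) : 1 < sInf (Sset q) := by
  obtain ⟨A, hA, rfl⟩ := h
  rw [muHexa_eq] at hA
  exact ENNReal.inv_lt_one.mp hA

lemma prodeq_of_mem {q : ℂ × ℂ × ℂ × ℂ} (h : q ∈ hexMu) (h0 : q.1 = 0) :
    q.2.2.2 = q.2.1 * q.2.2.1 := by
  obtain ⟨A, -, rfl⟩ := h
  have hA : A 1 0 = 0 := h0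
  show A.det = A 0 0 * A 1 1
  rw [Matrix.det_fin_two, hA, mul_zero, sub_zero]

lemma mem_of_matrix {q : ℂ × ℂ × ℂ × ℂ} (A : Matrix (Fin 2) (Fin 2) ℂ) (hA : piMap A = q)
    (h : 1 < sInf (Sset q)) : q ∈ hexMu :=
  ⟨A, by rw [muHexa_eq, hA]; exact ENNReal.inv_lt_one.mpr h, hA⟩

lemma mem_of_ne {q : ℂ × ℂ × ℂ × ℂ} (h1 : q.1 ≠ 0) (h : 1 < sInf (Sset q)) : q ∈ hexMu := by
  obtain ⟨a, x₁, x₂, x₃⟩ := q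
  simp only [ne_eq] at h1
  refine mem_of_matrix !![x₁, (x₁ * x₂ - x₃) / a; a, x₂] ?_ h
  unfold piMap
  simp only [Matrix.det_fin_two, Matrix.cons_val', Matrix.cons_val_zero, Matrix.cons_val_one,
    Matrix.head_cons, Matrix.empty_val', Matrix.cons_val_fin_one, Matrix.head_fin_const,
    Prod.mk.injEq]
  refine ⟨rfl, rfl, rfl, ?_⟩
  simp only [Matrix.of_apply, Matrix.cons_val', Matrix.cons_val_zero, Matrix.cons_val_one,
    Matrix.head_cons, Matrix.empty_val', Matrix.cons_val_fin_one, Matrix.vecHead, Matrix.vecTail]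
  field_simp
  ring

lemma tet_of_mem {q : ℂ × ℂ × ℂ × ℂ} (h : q ∈ hexMu) : q.2 ∈ tetrablock := by
  intro z₁ z₂ hz₁ hz₂ hden
  have h1 := one_lt_sInf_of_mem h
  have hmem : ENNReal.ofReal (opNorm2 !![z₁, 0; 0, z₂]) ∈ Sset q := by
    refine ⟨!![z₁, 0; 0, z₂], by simp, ?_, rfl⟩
    simp [hden]
  have hle : sInf (Sset q) ≤ ENNReal.ofReal (opNorm2 !![z₁, 0; 0, z₂]) := sInf_le hmem
  have hone : ENNReal.ofReal (opNorm2 !![z₁, 0; 0, z₂]) ≤ 1 :=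
    ENNReal.ofReal_le_one.mpr (diag_opNorm2_le hz₁ hz₂)
  exact absurd (h1.trans_le hle) (not_lt.mpr hone)

lemma eventually_one_lt {q₀ : ℂ × ℂ × ℂ × ℂ} (h : 1 < sInf (Sset q₀)) :
    ∀ᶠ q in nhds q₀, 1 < sInf (Sset q) := by
  obtain ⟨c, hc1, hc2⟩ := exists_between h
  have hctop : c ≠ ⊤ := (hc2.trans_le le_top).ne
  set t := c.toReal with ht_def
  have ht : 1 < t := by
    rw [show (1 : ℝ) = (1 : ENNReal).toReal by simp]
    exact (ENNReal.toReal_lt_toReal (by simp) hctop).mpr hc1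
  set s := (1 + t) / 2 with hs_def
  have hs1 : 1 < s := by rw [hs_def]; linarith
  have hst : s < t := by rw [hs_def]; linarith
  set K : Set (Matrix (Fin 2) (Fin 2) ℂ) := {X | X 1 0 = 0 ∧ opNorm2 X ≤ s} with hK_def
  have hKc : IsCompact K := by
    have hB : IsCompact (Set.univ.pi fun _ : Fin 2 =>
        Set.univ.pi fun _ : Fin 2 => Metric.closedBall (0 : ℂ) s) :=
      isCompact_univ_pi fun _ => isCompact_univ_pi fun _ => isCompact_closedBall 0 s
    refine hB.of_isClosed_subset ?_ ?_
    · refine IsClosed.inter ?_ (isClosed_le continuous_opNorm2 continuous_const)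
      exact isClosed_singleton.preimage
        ((continuous_apply (0 : Fin 2)).comp (continuous_apply (1 : Fin 2)))
    · intro X hX
      simp only [Set.mem_pi, Set.mem_univ, forall_true_left, Metric.mem_closedBall,
        dist_zero_right]
      intro i j
      exact (entry_le_opNorm2 X i j).trans hX.2
  set N : Set ((ℂ × ℂ × ℂ × ℂ) × Matrix (Fin 2) (Fin 2) ℂ) :=
    {p | hexDen p.1.2 (p.2 0 0) (p.2 1 1) - p.1.1 * p.2 0 1 ≠ 0} with hN_def
  have hNopen : IsOpen N := by
    rw [hN_def]
    exact (isOpen_compl_singleton (x := (0 : ℂ))).preimage continuous_H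
  have hsub : ({q₀} : Set (ℂ × ℂ × ℂ × ℂ)) ×ˢ K ⊆ N := by
    rintro ⟨q, X⟩ ⟨hq, hXK⟩
    rw [Set.mem_singleton_iff] at hq
    intro hzero
    rw [hq] at hzero
    have hmem : ENNReal.ofReal (opNorm2 X) ∈ Sset q₀ := ⟨X, hXK.1, hzero, rfl⟩
    have hle : sInf (Sset q₀) ≤ ENNReal.ofReal (opNorm2 X) := sInf_le hmem
    have hlt : ENNReal.ofReal (opNorm2 X) < c := by
      refine lt_of_le_of_lt (ENNReal.ofReal_le_ofReal hXK.2) ?_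
      rw [ENNReal.ofReal_lt_iff_lt_toReal (by linarith) hctop]
      exact hst
    exact absurd (hc2.trans_le hle) (not_lt.mpr hlt.le)
  obtain ⟨u, v, hu, _, hq₀u, hKv, huv⟩ :=
    generalized_tube_lemma isCompact_singleton hKc hNopen hsub
  refine Filter.eventually_of_mem (hu.mem_nhds (hq₀u rfl)) fun q hq => ?_
  have hub : ENNReal.ofReal s ≤ sInf (Sset q) := by
    refine le_sInf fun r hr => ?_
    obtain ⟨X, hX0, hXz, rfl⟩ := hr
    by_contra hlt
    push_neg at hlt
    have hXs : opNorm2 X ≤ s :=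
      ((ENNReal.ofReal_lt_ofReal_iff (by linarith)).mp hlt).le
    exact huv (Set.mk_mem_prod hq (hKv ⟨hX0, hXs⟩)) hXz
  exact lt_of_lt_of_le (ENNReal.one_lt_ofReal.mpr hs1) hub

lemma not_int {q : ℂ × ℂ × ℂ × ℂ} (h0 : q.1 = 0) : q ∉ interior hexMu := by
  intro hq
  have hmem : q ∈ hexMu := interior_subset hq
  have hprod := prodeq_of_mem hmem h0
  have hnh : hexMu ∈ nhds q := mem_interior_iff_mem_nhds.mp hq
  have hcont : Filter.Tendsto (fun δ : ℂ => (q.1, q.2.1, q.2.2.1, q.2.2.2 + δ))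
      (nhdsWithin 0 {(0 : ℂ)}ᶜ) (nhds q) := by
    have h1 : Filter.Tendsto (fun δ : ℂ => (q.1, q.2.1, q.2.2.1, q.2.2.2 + δ)) (nhds 0)
        (nhds (q.1, q.2.1, q.2.2.1, q.2.2.2 + 0)) := by
      apply Continuous.tendsto
      fun_prop
    rw [add_zero] at h1
    have h2 : (q.1, q.2.1, q.2.2.1, q.2.2.2) = q := rfl
    rw [h2] at h1
    exact h1.mono_left nhdsWithin_le_nhds
  have hev : ∀ᶠ δ in nhdsWithin 0 {(0 : ℂ)}ᶜ,
      (q.1, q.2.1, q.2.2.1, q.2.2.2 + δ) ∈ hexMu := hcont.eventually_mem hnh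
  have hfalse : ∀ᶠ δ in nhdsWithin 0 {(0 : ℂ)}ᶜ, False := by
    filter_upwards [hev, self_mem_nhdsWithin] with δ hδmem hδne
    have hpe := prodeq_of_mem hδmem h0
    simp only at hpe
    apply hδne
    have : q.2.2.2 + δ = q.2.2.2 := by rw [hpe, hprod]
    simpa using this
  obtain ⟨δ, hδ⟩ := hfalse.exists
  exact hδ

lemma zero_mem : ((0 : ℂ), (0 : ℂ), (0 : ℂ), (0 : ℂ)) ∈ hexMu := by
  refine mem_of_matrix 0 ?_ ?_
  · unfold piMap
    simp
  · have hempty : Sset (0, 0, 0, 0) = ∅ := by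
      ext r
      simp only [Sset, Set.mem_setOf_eq, Set.mem_empty_iff_false, iff_false, not_exists]
      rintro X ⟨-, hz, -⟩
      simp [hexDen] at hz
    rw [hempty, sInf_empty]
    exact ENNReal.one_lt_top

lemma interior_eq : interior hexMu = {q : ℂ × ℂ × ℂ × ℂ | q ∈ hexMu ∧ q.1 ≠ 0} := by
  ext q
  constructor
  · intro hq
    exact ⟨interior_subset hq, fun h0 => not_int h0 hq⟩
  · rintro ⟨hmem, hne⟩
    rw [mem_interior_iff_mem_nhds]
    have hev1 := eventually_one_lt (one_lt_sInf_of_mem hmem)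
    have hev2 : ∀ᶠ q' in nhds q, q'.1 ≠ 0 :=
      (isOpen_compl_singleton.preimage continuous_fst).mem_nhds hne
    filter_upwards [hev1, hev2] with q' h1 h2
    exact mem_of_ne h2 h1

end Stmt5Aux

/-- `ℍ_μ` is not open; points `(0, x₁, x₂, x₁x₂)` with
`(x₁, x₂, x₁x₂) ∈ 𝔼` are not interior, and `interior ℍ_μ = {q ∈ ℍ_μ : a ≠ 0}
= ℍ_μ \ ({0} × 𝔼)`. -/
theorem stmt5 :
    ¬ IsOpen hexMu ∧
    (∀ x₁ x₂ : ℂ, (x₁, x₂, x₁ * x₂) ∈ tetrablock →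
      (0, x₁, x₂, x₁ * x₂) ∉ interior hexMu) ∧
    interior hexMu = {q : ℂ × ℂ × ℂ × ℂ | q ∈ hexMu ∧ q.1 ≠ 0} ∧
    interior hexMu = hexMu \ {q : ℂ × ℂ × ℂ × ℂ | q.1 = 0 ∧ q.2 ∈ tetrablock} := by
  refine ⟨?_, ?_, Stmt5Aux.interior_eq, ?_⟩
  · intro hopen
    have h0 : ((0 : ℂ), (0 : ℂ), (0 : ℂ), (0 : ℂ)) ∈ interior hexMu := by
      rw [hopen.interior_eq]
      exact Stmt5Aux.zero_mem
    exact Stmt5Aux.not_int rfl h0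
  · intro x₁ x₂ _
    exact Stmt5Aux.not_int rfl
  · rw [Stmt5Aux.interior_eq]
    ext q
    simp only [Set.mem_setOf_eq, Set.mem_diff]
    constructor
    · rintro ⟨hmem, hne⟩
      exact ⟨hmem, fun hc => hne hc.1⟩
    · rintro ⟨hmem, hnot⟩
      refine ⟨hmem, fun h0 => hnot ⟨h0, Stmt5Aux.tet_of_mem hmem⟩⟩
end
end
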